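/- arXiv:1907.05202 — 9 statements merged into one kernel-verified Lean document; each statement's English description precedes it below -/
import Mathlib

section
/- For a nonnegative integer k and α ∈ (0,1), the limit as x → ∞ of (∑_{n ≤ x} (log n)^k / n^α − I_k(x,α)) exists, where I_k(x,α) = x^{1−α} · ∑_{i=0}^{k} (−1)^i · (k!/(k−i)!) · (log x)^{k−i} / (1−α)^{i+1}. -/
open Filter Real Finset

/-- `I_k(x, α) = x^{1-α} ∑_{i=0}^{k} (-1)^i (k!/(k-i)!) (log x)^{k-i} / (1-α)^{i+1}` -/
noncomputable def Ik (k : ℕ) (x α : ℝ) : ℝ :=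
  x ^ (1 - α) * ∑ i ∈ Finset.range (k + 1),
    (-1 : ℝ) ^ i * ((Nat.factorial k : ℝ) / (Nat.factorial (k - i) : ℝ)) *
      Real.log x ^ (k - i) / (1 - α) ^ (i + 1)

lemma hasDerivAt_base (m : ℕ) (α x : ℝ) (hx : 0 < x) :
    HasDerivAt (fun y : ℝ => y ^ (1 - α) * Real.log y ^ m)
      ((1 - α) * x ^ (-α) * Real.log x ^ m + (m : ℝ) * Real.log x ^ (m - 1) * x ^ (-α)) x := by
  have h1 : HasDerivAt (fun y : ℝ => y ^ (1 - α)) ((1 - α) * x ^ (1 - α - 1)) x :=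
    Real.hasDerivAt_rpow_const (Or.inl hx.ne')
  have h2 : HasDerivAt (fun y : ℝ => Real.log y ^ m) ((m : ℝ) * Real.log x ^ (m - 1) * x⁻¹) x :=
    (Real.hasDerivAt_log hx.ne').pow m
  have := h1.mul h2
  refine this.congr_deriv ?_
  have e1 : x ^ (1 - α - 1) = x ^ (-α) := by ring_nf
  have e2 : x ^ (1 - α) * x⁻¹ = x ^ (-α) := by
    rw [← Real.rpow_neg_one x, ← Real.rpow_add hx]; ring_nf
  rw [e1, ← e2]; ring

lemma hasDerivAt_Ik (k : ℕ) (α x : ℝ) (hx : 0 < x) (hα : α < 1) :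
    HasDerivAt (fun y : ℝ => Ik k y α) (Real.log x ^ k / x ^ α) x := by
  have hne : (1 : ℝ) - α ≠ 0 := by linarith
  have hIk : (fun y : ℝ => Ik k y α) = fun y : ℝ => ∑ i ∈ Finset.range (k + 1),
      ((-1 : ℝ) ^ i * ((Nat.factorial k : ℝ) / (Nat.factorial (k - i) : ℝ)) / (1 - α) ^ (i + 1)) *
        (y ^ (1 - α) * Real.log y ^ (k - i)) := by
    funext y
    rw [Ik, Finset.mul_sum]
    exact Finset.sum_congr rfl fun i _ => by ring
  rw [hIk]
  set c : ℕ → ℝ := fun i =>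
    (-1 : ℝ) ^ i * ((Nat.factorial k : ℝ) / (Nat.factorial (k - i) : ℝ)) / (1 - α) ^ (i + 1) with hc
  have hderiv : HasDerivAt
      (fun y : ℝ => ∑ i ∈ Finset.range (k + 1), c i * (y ^ (1 - α) * Real.log y ^ (k - i)))
      (∑ i ∈ Finset.range (k + 1), c i *
        ((1 - α) * x ^ (-α) * Real.log x ^ (k - i) +
          ((k - i : ℕ) : ℝ) * Real.log x ^ (k - i - 1) * x ^ (-α))) x :=
    HasDerivAt.fun_sum fun i _ => (hasDerivAt_base (k - i) α x hx).const_mul (c i)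
  convert hderiv using 1
  -- telescoping
  set b : ℕ → ℝ := fun i => if i ≤ k then
      (-1 : ℝ) ^ i * ((Nat.factorial k : ℝ) / (Nat.factorial (k - i) : ℝ)) / (1 - α) ^ i *
        Real.log x ^ (k - i) * x ^ (-α) else 0 with hb
  have key : ∀ i ∈ Finset.range (k + 1),
      c i * ((1 - α) * x ^ (-α) * Real.log x ^ (k - i) +
        ((k - i : ℕ) : ℝ) * Real.log x ^ (k - i - 1) * x ^ (-α)) = b i - b (i + 1) := by
    intro i hi
    rw [Finset.mem_range] at hi
    rcases lt_or_eq_of_le (Nat.lt_succ_iff.mp hi) with hik | hik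
    · -- i < k
      have h1 : i ≤ k := hik.le
      have h2 : i + 1 ≤ k := hik
      simp only [hb, hc, if_pos h1, if_pos h2]
      have hfac : (Nat.factorial (k - i) : ℝ) = (k - i : ℕ) * Nat.factorial (k - (i + 1)) := by
        have : k - i = (k - (i + 1)) + 1 := by omega
        rw [this, Nat.factorial_succ]
        push_cast
        ring_nf
      have hfacpos : (Nat.factorial (k - (i+1)) : ℝ) ≠ 0 := by
        exact_mod_cast (Nat.factorial_pos _).ne'
      have hkipos : ((k - i : ℕ) : ℝ) ≠ 0 := by
        have : 0 < k - i := by omega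
        exact_mod_cast this.ne'
      have hki1 : k - (i + 1) = k - i - 1 := by omega
      rw [hki1] at hfac ⊢
      field_simp
      rw [hfac]
      push_cast [h1]
      ring
    · -- i = k
      subst hik
      simp only [hb, hc, if_pos (le_refl i), if_neg (by omega : ¬ i + 1 ≤ i)]
      simp only [Nat.sub_self, pow_zero, Nat.cast_zero]
      field_simp
      ring
  rw [Finset.sum_congr rfl key, Finset.sum_range_sub' b (k + 1)]
  simp only [hb, if_pos (Nat.zero_le k), if_neg (by omega : ¬ k + 1 ≤ k)]
  have hf : (Nat.factorial k : ℝ) ≠ 0 := by exact_mod_cast (Nat.factorial_pos k).ne'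
  have hxα : x ^ α ≠ 0 := (Real.rpow_pos_of_pos hx α).ne'
  rw [Real.rpow_neg hx.le]
  field_simp
  simp only [Nat.sub_zero, mul_zero, sub_zero]
  ring

lemma fk_contOn (k : ℕ) (α : ℝ) :
    ContinuousOn (fun x : ℝ => Real.log x ^ k / x ^ α) (Set.Ici (1 : ℝ)) := by
  intro x hx
  have hx0 : (0 : ℝ) < x := lt_of_lt_of_le one_pos hx
  exact (((Real.continuousAt_log hx0.ne').pow k).div
    (Real.continuousAt_rpow_const x α (Or.inl hx0.ne'))
    (Real.rpow_pos_of_pos hx0 α).ne').continuousWithinAt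

lemma fk_integrable (k : ℕ) (α : ℝ) {a b : ℝ} (ha : 1 ≤ a) (hb : 1 ≤ b) :
    IntervalIntegrable (fun x : ℝ => Real.log x ^ k / x ^ α) MeasureTheory.volume a b := by
  apply ContinuousOn.intervalIntegrable
  apply (fk_contOn k α).mono
  intro y hy
  rcases le_total a b with h | h
  · rw [Set.uIcc_of_le h] at hy; exact le_trans ha hy.1
  · rw [Set.uIcc_of_ge h] at hy; exact le_trans hb hy.1

lemma fk_integral (k : ℕ) (α : ℝ) (hα : α < 1) {a b : ℝ} (ha : 1 ≤ a) (hb : 1 ≤ b) :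
    ∫ t in a..b, Real.log t ^ k / t ^ α = Ik k b α - Ik k a α := by
  apply intervalIntegral.integral_eq_sub_of_hasDerivAt
  · intro x hx
    have : (0 : ℝ) < x := by
      rcases le_total a b with h | h
      · rw [Set.uIcc_of_le h] at hx; linarith [hx.1]
      · rw [Set.uIcc_of_ge h] at hx; linarith [hx.1]
    exact hasDerivAt_Ik k α x this hα
  · exact fk_integrable k α ha hb

lemma hasDerivAt_fk (k : ℕ) (α x : ℝ) (hx : 0 < x) :
    HasDerivAt (fun y : ℝ => Real.log y ^ k / y ^ α)
      (x ^ (-α - 1) * ((k : ℝ) * Real.log x ^ (k - 1) - α * Real.log x ^ k)) x := by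
  have h2 : HasDerivAt (fun y : ℝ => Real.log y ^ k)
      ((k : ℝ) * Real.log x ^ (k - 1) * x⁻¹) x := (Real.hasDerivAt_log hx.ne').pow k
  have h1 : HasDerivAt (fun y : ℝ => y ^ (-α)) ((-α) * x ^ (-α - 1)) x :=
    Real.hasDerivAt_rpow_const (Or.inl hx.ne')
  have hmul := h2.mul h1
  have heq : (fun y : ℝ => Real.log y ^ k / y ^ α) =ᶠ[nhds x]
      (fun y : ℝ => Real.log y ^ k * y ^ (-α)) := by
    filter_upwards [eventually_gt_nhds hx] with y hy
    rw [Real.rpow_neg hy.le, div_eq_mul_inv]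
  refine HasDerivAt.congr_of_eventuallyEq ?_ heq
  refine hmul.congr_deriv ?_
  have e2 : x⁻¹ * x ^ (-α) = x ^ (-α - 1) := by
    rw [← Real.rpow_neg_one x, ← Real.rpow_add hx]; ring_nf
  rw [← e2]; ring

lemma fk_antitoneOn (k : ℕ) (α : ℝ) (hα : 0 < α) :
    AntitoneOn (fun x : ℝ => Real.log x ^ k / x ^ α)
      (Set.Ici (Real.exp ((k + 1) / α))) := by
  set T := Real.exp ((k + 1) / α) with hT
  have hT1 : (1 : ℝ) ≤ T := Real.one_le_exp (by positivity)
  apply antitoneOn_of_deriv_nonpos (convex_Ici T)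
  · exact (fk_contOn k α).mono (fun y hy => le_trans hT1 hy)
  · intro x hx
    rw [interior_Ici] at hx
    have hx0 : (0 : ℝ) < x := lt_of_lt_of_le one_pos (le_trans hT1 hx.le)
    exact (hasDerivAt_fk k α x hx0).differentiableAt.differentiableWithinAt
  · intro x hx
    rw [interior_Ici] at hx
    have hx0 : (0 : ℝ) < x := lt_of_lt_of_le one_pos (le_trans hT1 hx.le)
    rw [(hasDerivAt_fk k α x hx0).deriv]
    have hlog : (k + 1) / α ≤ Real.log x := by
      rw [← Real.log_exp ((k + 1) / α)]
      exact Real.log_le_log (Real.exp_pos _) hx.le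
    have hlog0 : 0 ≤ Real.log x := le_trans (by positivity) hlog
    have hkey : (k : ℝ) * Real.log x ^ (k - 1) - α * Real.log x ^ k ≤ 0 := by
      rcases Nat.eq_zero_or_pos k with hk | hk
      · subst hk; simpa using mul_nonneg hα.le (by positivity : (0:ℝ) ≤ Real.log x ^ 0)
      · have hk1 : k = (k - 1) + 1 := by omega
        have : α * Real.log x ^ k = (α * Real.log x) * Real.log x ^ (k - 1) := by
          nth_rewrite 1 [hk1]; ring
        rw [this]
        have h1 : (k : ℝ) ≤ α * Real.log x := by
          have := (div_le_iff₀ hα).mp hlog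
          nlinarith
        nlinarith [pow_nonneg hlog0 (k - 1)]
    have hxp : (0 : ℝ) ≤ x ^ (-α - 1) := (Real.rpow_pos_of_pos hx0 _).le
    exact mul_nonpos_of_nonneg_of_nonpos hxp hkey

lemma fk_tendsto_zero (k : ℕ) (α : ℝ) (hα : 0 < α) :
    Tendsto (fun x : ℝ => Real.log x ^ k / x ^ α) atTop (nhds 0) := by
  have := (isLittleO_log_rpow_rpow_atTop (k : ℝ) hα).tendsto_div_nhds_zero
  refine this.congr fun x => ?_
  rw [Real.rpow_natCast]

lemma fk_nonneg (k : ℕ) (α : ℝ) {x : ℝ} (hx : 1 ≤ x) :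
    0 ≤ Real.log x ^ k / x ^ α := by
  have : 0 ≤ Real.log x := Real.log_nonneg hx
  positivity

theorem stmt0 (k : ℕ) (α : ℝ) (hα : α ∈ Set.Ioo (0 : ℝ) 1) :
    ∃ c : ℝ, Tendsto
      (fun x : ℝ => (∑ n ∈ Finset.Icc 1 ⌊x⌋₊, Real.log n ^ k / (n : ℝ) ^ α) - Ik k x α)
      atTop (nhds c) := by
  obtain ⟨hα0, hα1⟩ := hα
  set f : ℝ → ℝ := fun x => Real.log x ^ k / x ^ α with hf
  set T : ℝ := Real.exp ((k + 1) / α) with hT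
  have hT1 : (1 : ℝ) ≤ T := Real.one_le_exp (by positivity)
  have hanti : AntitoneOn f (Set.Ici T) := fk_antitoneOn k α hα0
  set N0 : ℕ := ⌈T⌉₊ with hN0
  have hN0T : T ≤ (N0 : ℝ) := Nat.le_ceil T
  have hN01 : (1 : ℝ) ≤ (N0 : ℝ) := le_trans hT1 hN0T
  -- the sequence a n = f n - ∫_n^{n+1} f
  set a : ℕ → ℝ := fun n => f n - ∫ t in (n : ℝ)..((n : ℝ) + 1), f t with ha
  have hbound : ∀ n : ℕ, (N0 : ℝ) ≤ (n : ℝ) →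
      0 ≤ a n ∧ a n ≤ f n - f ((n : ℝ) + 1) := by
    intro n hn
    have hn1 : (1 : ℝ) ≤ (n : ℝ) := le_trans hN01 hn
    have hnT : T ≤ (n : ℝ) := le_trans hN0T hn
    have hint : IntervalIntegrable f MeasureTheory.volume (n : ℝ) ((n : ℝ) + 1) :=
      fk_integrable k α hn1 (by linarith)
    have hsub : Set.Icc (n : ℝ) ((n : ℝ) + 1) ⊆ Set.Ici T := fun y hy => le_trans hnT hy.1
    have hnn : (n : ℝ) ∈ Set.Ici T := hnT
    have hn1n : (n : ℝ) + 1 ∈ Set.Ici T := by simp only [Set.mem_Ici]; linarith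
    have low : f ((n : ℝ) + 1) ≤ ∫ t in (n : ℝ)..((n : ℝ) + 1), f t := by
      have := intervalIntegral.integral_mono_on (by linarith : (n:ℝ) ≤ (n:ℝ)+1)
        (intervalIntegrable_const (c := f ((n : ℝ) + 1))) hint
        (fun t ht => hanti (hsub ht) hn1n ht.2)
      simpa using this
    have up : (∫ t in (n : ℝ)..((n : ℝ) + 1), f t) ≤ f n := by
      have := intervalIntegral.integral_mono_on (by linarith : (n:ℝ) ≤ (n:ℝ)+1)
        hint (intervalIntegrable_const (c := f (n : ℝ)))
        (fun t ht => hanti hnn (hsub ht) ht.1)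
      simpa using this
    constructor
    · simp only [ha]; linarith
    · simp only [ha]; linarith
  -- summable tail
  set g : ℕ → ℝ := fun j => a (N0 + 1 + j) with hg
  have hcast : ∀ j : ℕ, ((N0 + 1 + j : ℕ) : ℝ) = (N0 : ℝ) + 1 + j := by intro j; push_cast; ring
  have hgN0 : ∀ j : ℕ, (N0 : ℝ) ≤ ((N0 + 1 + j : ℕ) : ℝ) := by
    intro j; rw [hcast]; have : (0:ℝ) ≤ j := Nat.cast_nonneg j; linarith
  set F : ℕ → ℝ := fun j => f ((N0 + 1 + j : ℕ) : ℝ) with hF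
  have hFanti : ∀ j : ℕ, F (j + 1) ≤ F j := by
    intro j
    have c1 := hcast j
    have c2 := hcast (j + 1)
    have hj : (0:ℝ) ≤ (j : ℝ) := Nat.cast_nonneg j
    apply hanti
    · exact Set.mem_Ici.mpr (by rw [c1]; linarith)
    · exact Set.mem_Ici.mpr (by rw [c2]; push_cast; linarith)
    · rw [c1, c2]; push_cast; linarith
  have hFnonneg : ∀ j : ℕ, 0 ≤ F j := by
    intro j
    have c1 := hcast j
    have hj : (0:ℝ) ≤ (j : ℝ) := Nat.cast_nonneg j
    exact fk_nonneg k α (by rw [c1]; linarith)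
  have hFsummable : Summable (fun j => F j - F (j + 1)) := by
    apply summable_of_sum_range_le (c := F 0)
    · intro j; linarith [hFanti j]
    · intro n
      rw [Finset.sum_range_sub' F n]
      linarith [hFnonneg n]
  have hgsummable : Summable g := by
    apply Summable.of_nonneg_of_le (fun j => (hbound _ (hgN0 j)).1) (fun j => ?_) hFsummable
    have h2 := (hbound _ (hgN0 j)).2
    have : f (((N0 + 1 + j : ℕ) : ℝ) + 1) = F (j + 1) := by
      simp only [hF]; congr 1; rw [hcast, hcast]; push_cast; ring
    rw [this] at h2
    exact h2
  -- partial sums A N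
  set A : ℕ → ℝ := fun N => ∑ n ∈ Finset.Icc 1 N, a n with hA
  set L : ℝ := A N0 + ∑' j, g j with hL
  have htendA : Tendsto A atTop (nhds L) := by
    have h1 : Tendsto (fun m => ∑ j ∈ Finset.range m, g j) atTop (nhds (∑' j, g j)) :=
      hgsummable.hasSum.tendsto_sum_nat
    have h2 : Tendsto (fun N : ℕ => A N0 + ∑ j ∈ Finset.range (N - N0), g j) atTop (nhds L) :=
      (h1.comp (tendsto_sub_atTop_nat N0)).const_add (A N0)
    apply h2.congr'
    filter_upwards [eventually_ge_atTop N0] with N hN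
    have e1 : Finset.Icc 1 N = Finset.Ioc 0 N := (Finset.Icc_add_one_left_eq_Ioc 0 N).symm ▸ rfl
    have e2 : Finset.Icc 1 N0 = Finset.Ioc 0 N0 := (Finset.Icc_add_one_left_eq_Ioc 0 N0).symm ▸ rfl
    have hsplit := Finset.sum_Ioc_consecutive a (Nat.zero_le N0) hN
    have e3 : ∑ n ∈ Finset.Ioc N0 N, a n = ∑ j ∈ Finset.range (N - N0), g j := by
      rw [← Finset.Icc_add_one_left_eq_Ioc, ← Finset.Ico_add_one_right_eq_Icc, Finset.sum_Ico_eq_sum_range]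
      have : N + 1 - (N0 + 1) = N - N0 := by omega
      rw [this]
    simp only [hA]
    rw [e1, e2, ← hsplit, e3]
  -- Euler summation identity
  have hSA : ∀ N : ℕ, 1 ≤ N →
      (∑ n ∈ Finset.Icc 1 N, f n) - (∫ t in (1 : ℝ)..((N : ℝ) + 1), f t) = A N := by
    intro N hN
    have hadj : ∀ i : ℕ, i < N → IntervalIntegrable f MeasureTheory.volume
        ((i : ℝ) + 1) (((i + 1 : ℕ) : ℝ) + 1) := by
      intro i _
      apply fk_integrable k α (by have : (0:ℝ) ≤ i := Nat.cast_nonneg i; linarith)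
      push_cast
      have : (0:ℝ) ≤ i := Nat.cast_nonneg i; linarith
    have hint : ∑ i ∈ Finset.range N, (∫ t in ((i:ℝ)+1)..(((i+1:ℕ):ℝ)+1), f t)
        = ∫ t in (1:ℝ)..((N:ℝ)+1), f t := by
      have := intervalIntegral.sum_integral_adjacent_intervals
        (a := fun i : ℕ => (i : ℝ) + 1) (n := N) (f := f) (μ := MeasureTheory.volume) ?_
      · simpa using this
      · intro i hi
        simpa using hadj i hi
    have hreindex : ∑ n ∈ Finset.Icc 1 N, (∫ t in (n:ℝ)..((n:ℝ)+1), f t)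
        = ∑ i ∈ Finset.range N, (∫ t in ((i:ℝ)+1)..(((i+1:ℕ):ℝ)+1), f t) := by
      rw [← Finset.Ico_add_one_right_eq_Icc, Finset.sum_Ico_eq_sum_range]
      have : N + 1 - 1 = N := by omega
      rw [this]
      refine Finset.sum_congr rfl fun i _ => ?_
      push_cast
      ring_nf
    simp only [hA, ha, Finset.sum_sub_distrib]
    rw [hreindex, hint]
  -- FTC
  have hFTC : ∀ x : ℝ, 1 ≤ x → Ik k x α = Ik k 1 α + ∫ t in (1:ℝ)..x, f t := by
    intro x hx
    rw [fk_integral k α hα1 le_rfl hx]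
    ring
  -- eventual identity
  have hid : ∀ᶠ x : ℝ in atTop,
      ((∑ n ∈ Finset.Icc 1 ⌊x⌋₊, Real.log n ^ k / (n : ℝ) ^ α) - Ik k x α)
        = A ⌊x⌋₊ + (∫ t in x..((⌊x⌋₊ : ℝ) + 1), f t) - Ik k 1 α := by
    filter_upwards [eventually_ge_atTop ((N0 : ℝ) + 1)] with x hx
    have hx1 : (1 : ℝ) ≤ x := by linarith
    set N : ℕ := ⌊x⌋₊ with hN
    have hNx : (N : ℝ) ≤ x := Nat.floor_le (by linarith)
    have hxN : x < (N : ℝ) + 1 := Nat.lt_floor_add_one x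
    have hN1 : 1 ≤ N := by
      rw [hN]; apply Nat.le_floor; exact_mod_cast hx1
    have hsplit : (∫ t in (1:ℝ)..x, f t) + (∫ t in x..((N:ℝ)+1), f t)
        = ∫ t in (1:ℝ)..((N:ℝ)+1), f t := by
      apply intervalIntegral.integral_add_adjacent_intervals
      · exact fk_integrable k α le_rfl hx1
      · have h0 : (0:ℝ) ≤ (N:ℝ) := Nat.cast_nonneg N
        exact fk_integrable k α hx1 (by linarith)
    have hS : (∑ n ∈ Finset.Icc 1 N, Real.log n ^ k / (n : ℝ) ^ α) = ∑ n ∈ Finset.Icc 1 N, f n :=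
      rfl
    rw [hS, hFTC x hx1]
    have := hSA N hN1
    linarith [hsplit, this]
  -- tendsto of the integral remainder term
  have hrem : Tendsto (fun x : ℝ => ∫ t in x..((⌊x⌋₊ : ℝ) + 1), f t) atTop (nhds 0) := by
    apply squeeze_zero' (g := f)
    · filter_upwards [eventually_ge_atTop (max 1 T)] with x hx
      have hx1 : (1:ℝ) ≤ x := le_trans (le_max_left _ _) hx
      apply intervalIntegral.integral_nonneg ((Nat.lt_floor_add_one x).le)
      intro t ht
      exact fk_nonneg k α (le_trans hx1 ht.1)
    · filter_upwards [eventually_ge_atTop (max 1 T)] with x hx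
      have hx1 : (1:ℝ) ≤ x := le_trans (le_max_left _ _) hx
      have hxT : T ≤ x := le_trans (le_max_right _ _) hx
      have hxN : x ≤ (⌊x⌋₊ : ℝ) + 1 := (Nat.lt_floor_add_one x).le
      have hNx : (⌊x⌋₊ : ℝ) ≤ x := Nat.floor_le (by linarith)
      have hup : (∫ t in x..((⌊x⌋₊ : ℝ) + 1), f t) ≤ ((⌊x⌋₊ : ℝ) + 1 - x) * f x := by
        have hmono := intervalIntegral.integral_mono_on hxN
          (fk_integrable k α hx1 (by linarith)) (intervalIntegrable_const (c := f x))
          (fun t ht => hanti (Set.mem_Ici.mpr hxT) (Set.mem_Ici.mpr (le_trans hxT ht.1)) ht.1)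
        simpa [smul_eq_mul, mul_div_assoc] using hmono
      have hfx : 0 ≤ f x := fk_nonneg k α hx1
      calc (∫ t in x..((⌊x⌋₊ : ℝ) + 1), f t) ≤ ((⌊x⌋₊ : ℝ) + 1 - x) * f x := hup
        _ ≤ 1 * f x := by nlinarith
        _ = f x := one_mul _
    · exact fk_tendsto_zero k α hα0
  refine ⟨L + 0 - Ik k 1 α, ?_⟩
  exact Tendsto.congr' (hid.mono fun x hx => hx.symm)
    (((htendA.comp tendsto_nat_floor_atTop).add hrem).sub tendsto_const_nhds)
end

section
/- For α ∈ (0,1), k ∈ ℕ, and positive integers r ≤ q, the limit defining the shifted Euler constant ζ_k(α,r,q) := lim_{x→∞} (∑_{n ≤ x, n ≡ r mod q} (log n)^k / n^α − I_k(x,α)/q) exists. -/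
open Filter Real Finset

/-- `H_k(x, α, r, q) = ∑_{n ≤ x, n ≡ r mod q} (log n)^k / n^α` -/
noncomputable def Hk (k : ℕ) (α : ℝ) (r q : ℕ) (x : ℝ) : ℝ :=
  ∑ n ∈ Finset.Icc 1 ⌊x⌋₊, if n % q = r % q then Real.log n ^ k / (n : ℝ) ^ α else 0

noncomputable def gg (k : ℕ) (α : ℝ) (t : ℝ) : ℝ := Real.log t ^ k / t ^ α


lemma gg_cont (k : ℕ) (α : ℝ) : ContinuousOn (gg k α) (Set.Ici 1) := by
  apply ContinuousOn.div
  · exact (Real.continuousOn_log.mono (fun x hx => by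
      simp only [Set.mem_compl_iff, Set.mem_singleton_iff]
      intro h; rw [h] at hx; norm_num at hx)).pow k
  · exact continuousOn_id.rpow_const (fun x hx => Or.inl (by
      simp only [id_eq]; intro h; rw [h] at hx; simp [Set.mem_Ici] at hx; linarith))
  · intro x hx
    exact (Real.rpow_pos_of_pos (lt_of_lt_of_le one_pos hx) α).ne'


lemma gg_nonneg (k : ℕ) (α : ℝ) {t : ℝ} (ht : 1 ≤ t) : 0 ≤ gg k α t :=
  div_nonneg (pow_nonneg (Real.log_nonneg ht) k) (Real.rpow_nonneg (by linarith) α)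


lemma gg_tendsto (k : ℕ) {α : ℝ} (hα : 0 < α) : Tendsto (gg k α) atTop (nhds 0) := by
  have h := (isLittleO_log_rpow_rpow_atTop (k : ℝ) hα).tendsto_div_nhds_zero
  exact h.congr (fun x => by rw [Real.rpow_natCast]; rfl)


lemma gg_hasDeriv (k : ℕ) (α : ℝ) {t : ℝ} (ht : 0 < t) :
    HasDerivAt (gg k α) ((((k:ℝ) * Real.log t ^ (k-1)) - α * Real.log t ^ k) * t ^ (-α - 1)) t := by
  have hlog : HasDerivAt (fun y => Real.log y ^ k) ((k:ℝ) * Real.log t ^ (k-1) * t⁻¹) t :=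
    (Real.hasDerivAt_log ht.ne').pow k
  have hp : HasDerivAt (fun y : ℝ => y ^ (-α)) ((-α) * t ^ (-α - 1)) t :=
    Real.hasDerivAt_rpow_const (Or.inl ht.ne')
  have hmul : HasDerivAt (fun y => Real.log y ^ k * y ^ (-α)) _ t := hlog.mul hp
  have heq : (fun y => Real.log y ^ k * y ^ (-α)) =ᶠ[nhds t] gg k α := by
    filter_upwards [eventually_gt_nhds ht] with y hy
    rw [gg, Real.rpow_neg hy.le, div_eq_mul_inv]
  have h2 : t ^ (-α - 1) = t ^ (-α) * t⁻¹ := by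
    rw [show -α - 1 = -α + (-1) by ring, Real.rpow_add ht, Real.rpow_neg_one]
  refine (HasDerivAt.congr_of_eventuallyEq ?_ heq.symm)
  refine hmul.congr_deriv ?_
  rw [h2]; ring


lemma gg_anti (k : ℕ) {α : ℝ} (hα0 : 0 < α) :
    AntitoneOn (gg k α) (Set.Ici (max 2 (Real.exp ((k:ℝ) / α)))) := by
  set T := max 2 (Real.exp ((k:ℝ)/α)) with hT
  have hT0 : (0:ℝ) < T := lt_of_lt_of_le two_pos (le_max_left _ _)
  apply antitoneOn_of_deriv_nonpos (convex_Ici T)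
  · exact (gg_cont k α).mono (fun x hx => le_trans (le_trans (by norm_num : (1:ℝ) ≤ 2) (le_max_left 2 _)) hx)
  · intro x hx
    rw [interior_Ici] at hx
    exact (gg_hasDeriv k α (lt_trans hT0 hx)).differentiableAt.differentiableWithinAt
  · intro x hx
    rw [interior_Ici] at hx
    have hx0 : 0 < x := lt_trans hT0 hx
    rw [(gg_hasDeriv k α hx0).deriv]
    apply mul_nonpos_of_nonpos_of_nonneg
    · have hL : (k:ℝ)/α ≤ Real.log x := by
        have h1 : Real.exp ((k:ℝ)/α) ≤ x := le_trans (le_max_right _ _) hx.le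
        have := Real.log_le_log (Real.exp_pos _) h1
        rwa [Real.log_exp] at this
      have hL0 : 0 ≤ Real.log x := le_trans (div_nonneg (Nat.cast_nonneg k) hα0.le) hL
      have h2 : (k:ℝ) ≤ α * Real.log x := by
        rw [div_le_iff₀ hα0] at hL; linarith [hL]
      rcases Nat.eq_zero_or_pos k with hk | hk
      · subst hk; simp; positivity
      · have hpow : Real.log x ^ k = Real.log x ^ (k-1) * Real.log x := by
          conv_lhs => rw [← Nat.succ_pred_eq_of_pos hk]
          rw [pow_succ, Nat.pred_eq_sub_one]
        rw [hpow]
        have h3 : 0 ≤ Real.log x ^ (k-1) := pow_nonneg hL0 _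
        nlinarith [mul_le_mul_of_nonneg_left h2 h3]
    · exact Real.rpow_nonneg hx0.le _


lemma Ik_succ (k : ℕ) (x α : ℝ) (hα : (1:ℝ) - α ≠ 0) :
    Ik (k+1) x α = x ^ (1-α) * Real.log x ^ (k+1) / (1-α)
      - ((k+1 : ℝ)/(1-α)) * Ik k x α := by
  unfold Ik
  rw [Finset.sum_range_succ']
  have key : ∀ i ∈ Finset.range (k+1),
      (-1:ℝ)^(i+1) * ((Nat.factorial (k+1) : ℝ) / (Nat.factorial (k+1-(i+1)) : ℝ)) *
        Real.log x ^ (k+1-(i+1)) / (1-α)^(i+1+1)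
      = -((k+1:ℝ)/(1-α)) * ((-1:ℝ)^i * ((Nat.factorial k : ℝ)/(Nat.factorial (k-i):ℝ)) *
          Real.log x ^ (k-i) / (1-α)^(i+1)) := by
    intro i hi
    have h1 : k+1-(i+1) = k-i := by omega
    rw [h1, Nat.factorial_succ]
    have h2 : ((Nat.factorial (k-i) : ℝ)) ≠ 0 := Nat.cast_ne_zero.mpr (Nat.factorial_ne_zero _)
    push_cast
    field_simp
    ring
  rw [Finset.sum_congr rfl key, ← Finset.mul_sum]
  have h0 : ((-1:ℝ))^0 * ((Nat.factorial (k+1) : ℝ) / (Nat.factorial (k+1-0) : ℝ)) *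
      Real.log x ^ (k+1-0) / (1-α)^(0+1) = Real.log x ^ (k+1) / (1-α) := by
    simp [div_self (Nat.cast_ne_zero.mpr (Nat.factorial_ne_zero (k+1)) : ((k+1).factorial:ℝ) ≠ 0)]
  rw [h0]
  ring


lemma Ik_hasDeriv (k : ℕ) {α x : ℝ} (hα : (1:ℝ) - α ≠ 0) (hx : 0 < x) :
    HasDerivAt (fun y => Ik k y α) (gg k α x) x := by
  induction k with
  | zero =>
    have h : (fun y => Ik 0 y α) = fun y : ℝ => y ^ (1-α) * ((1:ℝ)/(1-α)) := by
      funext y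
      simp [Ik, Nat.factorial]
    rw [h]
    have hd : HasDerivAt (fun y : ℝ => y ^ (1-α)) ((1-α) * x ^ (1-α-1)) x :=
      Real.hasDerivAt_rpow_const (Or.inl hx.ne')
    have := hd.mul_const ((1:ℝ)/(1-α))
    refine this.congr_deriv ?_
    have he : x ^ (1-α-1) = (x ^ α)⁻¹ := by
      rw [show (1:ℝ)-α-1 = -α by ring, Real.rpow_neg hx.le]
    rw [gg, he]
    field_simp
  | succ k ih =>
    have h : (fun y => Ik (k+1) y α) = fun y =>
        y ^ (1-α) * Real.log y ^ (k+1) / (1-α) - ((k+1 : ℝ)/(1-α)) * Ik k y α := by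
      funext y; exact Ik_succ k y α hα
    rw [h]
    have hd1 : HasDerivAt (fun y : ℝ => y ^ (1-α)) ((1-α) * x ^ (1-α-1)) x :=
      Real.hasDerivAt_rpow_const (Or.inl hx.ne')
    have hd2 : HasDerivAt (fun y => Real.log y ^ (k+1))
        ((k+1:ℝ) * Real.log x ^ k * x⁻¹) x := by
      have := (Real.hasDerivAt_log hx.ne').pow (k+1)
      simp only [Nat.cast_add, Nat.cast_one, Nat.add_sub_cancel] at this
      exact this
    have hd := ((hd1.mul hd2).div_const (1-α)).sub ((ih).const_mul ((k+1:ℝ)/(1-α)))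
    refine hd.congr_deriv ?_
    have hxα : x ^ α ≠ 0 := (Real.rpow_pos_of_pos hx α).ne'
    have he1 : x ^ ((1:ℝ)-α-1) = (x ^ α)⁻¹ := by
      rw [show (1:ℝ)-α-1 = -α by ring, Real.rpow_neg hx.le]
    have he2 : x ^ ((1:ℝ)-α) = x * (x ^ α)⁻¹ := by
      rw [show (1:ℝ)-α = 1 + (-α) by ring, Real.rpow_add hx, Real.rpow_neg hx.le, Real.rpow_one]
    rw [gg, gg, he1, he2, pow_succ]
    field_simp
    ring


lemma gg_intble (k : ℕ) (α : ℝ) {a b : ℝ} (ha : 1 ≤ a) (hab : a ≤ b) :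
    IntervalIntegrable (gg k α) MeasureTheory.volume a b := by
  apply ContinuousOn.intervalIntegrable
  apply (gg_cont k α).mono
  rw [Set.uIcc_of_le hab]
  intro x hx; exact le_trans ha hx.1


lemma Ik_FTC (k : ℕ) {α a b : ℝ} (hα : (1:ℝ) - α ≠ 0) (ha : 1 ≤ a) (hab : a ≤ b) :
    ∫ t in a..b, gg k α t = Ik k b α - Ik k a α := by
  apply intervalIntegral.integral_eq_sub_of_hasDerivAt
  · intro x hx
    rw [Set.uIcc_of_le hab] at hx
    exact Ik_hasDeriv k hα (lt_of_lt_of_le one_pos (le_trans ha hx.1))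
  · exact gg_intble k α ha hab


section reindex
variable {q r : ℕ} (hr : 0 < r) (hrq : r ≤ q)
include hr hrq

lemma mem_iff (N m : ℕ) : q*m + r ≤ N ↔ m < (N + q - r)/q := by
  have hq : 0 < q := lt_of_lt_of_le hr hrq
  rw [Nat.lt_iff_add_one_le, Nat.le_div_iff_mul_le hq]
  have h : (m+1)*q = q*m + q := by ring
  rw [h]; omega

lemma rep {n : ℕ} (hn : 1 ≤ n) (hmod : n % q = r % q) : ∃ m, n = q*m + r := by
  have hq : 0 < q := lt_of_lt_of_le hr hrq
  rcases eq_or_lt_of_le hrq with h | h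
  · subst h
    have h0 : n % r = 0 := by simpa using hmod
    obtain ⟨c, hc⟩ := Nat.dvd_of_mod_eq_zero h0
    rcases c with _ | c
    · omega
    · exact ⟨c, by rw [hc]; ring⟩
  · have : r % q = r := Nat.mod_eq_of_lt h
    rw [this] at hmod
    exact ⟨n / q, by conv_lhs => rw [← Nat.div_add_mod n q, hmod]⟩

lemma sum_reindex (N : ℕ) (f : ℕ → ℝ) :
    (∑ n ∈ Finset.Icc 1 N, if n % q = r % q then f n else 0)
      = ∑ m ∈ Finset.range ((N + q - r)/q), f (q*m + r) := by
  have hq : 0 < q := lt_of_lt_of_le hr hrq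
  rw [← Finset.sum_filter]
  apply Finset.sum_nbij' (i := fun n => (n + q - r)/q - 1) (j := fun m => q*m + r)
  · intro n hn
    simp only [Finset.mem_filter, Finset.mem_Icc] at hn
    obtain ⟨⟨h1, h2⟩, h3⟩ := hn
    obtain ⟨m, hm⟩ := rep hr hrq h1 h3
    have him : (n + q - r)/q - 1 = m := by
      rw [hm, show q*m + r + q - r = (m+1)*q by ring_nf; omega, Nat.mul_div_cancel _ hq, Nat.add_sub_cancel]
    rw [Finset.mem_range, him]
    subst hm
    exact (mem_iff hr hrq N m).mp h2
  · intro m hm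
    rw [Finset.mem_range] at hm
    simp only [Finset.mem_filter, Finset.mem_Icc]
    refine ⟨⟨by omega, (mem_iff hr hrq N m).mpr hm⟩, by rw [Nat.mul_add_mod]⟩
  · intro n hn
    simp only [Finset.mem_filter, Finset.mem_Icc] at hn
    obtain ⟨⟨h1, h2⟩, h3⟩ := hn
    obtain ⟨m, hm⟩ := rep hr hrq h1 h3
    have him : (n + q - r)/q - 1 = m := by
      rw [hm, show q*m + r + q - r = (m+1)*q by ring_nf; omega, Nat.mul_div_cancel _ hq, Nat.add_sub_cancel]
    rw [him, hm]
  · intro m hm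
    rw [show q*m + r + q - r = (m+1)*q by ring_nf; omega, Nat.mul_div_cancel _ hq, Nat.add_sub_cancel]
  · intro n hn
    simp only [Finset.mem_filter, Finset.mem_Icc] at hn
    obtain ⟨⟨h1, h2⟩, h3⟩ := hn
    obtain ⟨m, hm⟩ := rep hr hrq h1 h3
    have him : (n + q - r)/q - 1 = m := by
      rw [hm, show q*m + r + q - r = (m+1)*q by ring_nf; omega, Nat.mul_div_cancel _ hq, Nat.add_sub_cancel]
    rw [him, hm]

end reindex

set_option maxHeartbeats 1000000 in
theorem stmt1 (k : ℕ) (α : ℝ) (hα : α ∈ Set.Ioo (0 : ℝ) 1) (r q : ℕ)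
    (hr : 0 < r) (hrq : r ≤ q) :
    ∃ c : ℝ, Tendsto (fun x : ℝ => Hk k α r q x - Ik k x α / q) atTop (nhds c) := by
  obtain ⟨hα0, hα1⟩ := hα
  have hq : 0 < q := lt_of_lt_of_le hr hrq
  have hqR : (0:ℝ) < q := by exact_mod_cast hq
  have hq1 : (1:ℝ) ≤ q := by exact_mod_cast hq
  have hr1 : (1:ℝ) ≤ r := by exact_mod_cast hr
  have h1α : (1:ℝ) - α ≠ 0 := by linarith
  set T : ℝ := max 2 (Real.exp ((k:ℝ)/α)) with hTdef
  have hT2 : (2:ℝ) ≤ T := le_max_left _ _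
  set h : ℕ → ℝ := fun m => gg k α ((q:ℝ)*m + r) with hh
  set b : ℕ → ℝ := fun m => h m - ∫ s in (m:ℝ)..((m:ℝ)+1), gg k α ((q:ℝ)*s + r) with hbdef
  -- basic positivity of arguments
  have harg1 : ∀ m : ℕ, (1:ℝ) ≤ (q:ℝ)*m + r := by
    intro m
    have : (0:ℝ) ≤ (q:ℝ)*m := by positivity
    linarith
  have hmono_arg : ∀ {s t : ℝ}, s ≤ t → (q:ℝ)*s + r ≤ (q:ℝ)*t + r := by
    intro s t hst
    have := mul_le_mul_of_nonneg_left hst hqR.le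
    linarith
  -- integrability of the composed function
  have hint : ∀ (u v : ℝ), 0 ≤ u → u ≤ v →
      IntervalIntegrable (fun s => gg k α ((q:ℝ)*s + r)) MeasureTheory.volume u v := by
    intro u v hu huv
    apply ContinuousOn.intervalIntegrable
    apply ContinuousOn.comp (gg_cont k α)
    · exact (continuous_const.mul continuous_id |>.add continuous_const).continuousOn
    · intro s hs
      rw [Set.uIcc_of_le huv] at hs
      have hs0 : (0:ℝ) ≤ s := le_trans hu hs.1
      have : (0:ℝ) ≤ (q:ℝ)*s := by positivity
      simp only [Set.mem_Ici]
      linarith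
  -- nonnegativity of h
  have h_nonneg : ∀ m, 0 ≤ h m := fun m => gg_nonneg k α (harg1 m)
  -- m0 and antitone region
  set m0 : ℕ := ⌈T⌉₊ with hm0
  have hm0arg : ∀ {m : ℕ}, m0 ≤ m → T ≤ (q:ℝ)*m + r := by
    intro m hm
    have h1 : T ≤ (m:ℝ) := Nat.ceil_le.mp hm
    have h2 : (m:ℝ) ≤ (q:ℝ)*m + r := by nlinarith [Nat.cast_nonneg (α := ℝ) m]
    linarith
  -- bounds on b m for m ≥ m0
  have hb_bounds : ∀ m : ℕ, m0 ≤ m → 0 ≤ b m ∧ b m ≤ h m - h (m+1) := by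
    intro m hm
    have hTm : T ≤ (q:ℝ)*m + r := hm0arg hm
    have hle : (m:ℝ) ≤ (m:ℝ)+1 := by linarith
    have hmem : ∀ s ∈ Set.Icc (m:ℝ) ((m:ℝ)+1), (q:ℝ)*s + r ∈ Set.Ici T := by
      intro s hs
      exact le_trans hTm (hmono_arg hs.1)
    have hub : ∫ s in (m:ℝ)..((m:ℝ)+1), gg k α ((q:ℝ)*s + r) ≤ h m := by
      have := intervalIntegral.integral_mono_on hle (hint m (m+1) (Nat.cast_nonneg m) hle)
        (intervalIntegrable_const (c := h m)) (fun s hs => by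
          exact gg_anti k hα0 (Set.mem_Ici.mpr hTm) (hmem s hs) (hmono_arg hs.1))
      simpa using this
    have hlb : h (m+1) ≤ ∫ s in (m:ℝ)..((m:ℝ)+1), gg k α ((q:ℝ)*s + r) := by
      have harg : (q:ℝ)*(m+1) + r ∈ Set.Ici T := by
        push_cast
        exact le_trans hTm (hmono_arg (by linarith))
      have := intervalIntegral.integral_mono_on hle
        (intervalIntegrable_const (c := h (m+1))) (hint m (m+1) (Nat.cast_nonneg m) hle)
        (fun s hs => by
          have : gg k α ((q:ℝ)*((m:ℝ)+1) + r) ≤ gg k α ((q:ℝ)*s + r) :=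
            gg_anti k hα0 (hmem s hs) harg (hmono_arg hs.2)
          simpa [hh] using this)
      simpa [hh] using this
    constructor
    · simp only [hbdef]; linarith
    · simp only [hbdef]; linarith
  -- antitonicity of h
  have h_anti : ∀ {m n : ℕ}, m0 ≤ m → m ≤ n → h n ≤ h m := by
    intro m n hm hmn
    apply gg_anti k hα0 (Set.mem_Ici.mpr (hm0arg hm))
      (Set.mem_Ici.mpr (hm0arg (le_trans hm hmn)))
    exact hmono_arg (by exact_mod_cast hmn)
  -- summability of b
  have hb_sum : Summable b := by
    rw [← summable_nat_add_iff m0]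
    apply Summable.of_nonneg_of_le (f := fun n => h (n+m0) - h ((n+1)+m0))
      (fun n => (hb_bounds (n+m0) (Nat.le_add_left m0 n)).1)
      (fun n => by
        have e : n+m0+1 = n+1+m0 := by omega
        have h2 := (hb_bounds (n+m0) (Nat.le_add_left m0 n)).2
        rwa [e] at h2)
    apply summable_of_sum_range_le (c := h m0)
    · intro n
      exact sub_nonneg.mpr (h_anti (Nat.le_add_left m0 n) (by omega))
    · intro n
      rw [Finset.sum_range_sub' (fun i => h (i+m0)) n]
      simp only [Nat.zero_add]
      linarith [h_nonneg (n+m0)]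
  -- key identity for partial sums of b
  have key : ∀ M : ℕ, ∑ m ∈ Finset.range M, b m
      = (∑ m ∈ Finset.range M, h m)
        - (q:ℝ)⁻¹ * (Ik k ((q:ℝ)*M + r) α - Ik k (r:ℝ) α) := by
    intro M
    have hsplit : ∑ m ∈ Finset.range M, b m
        = (∑ m ∈ Finset.range M, h m)
          - ∑ m ∈ Finset.range M, ∫ s in (m:ℝ)..((m:ℝ)+1), gg k α ((q:ℝ)*s + r) := by
      rw [← Finset.sum_sub_distrib]
    rw [hsplit]
    congr 1
    have hadj : ∑ m ∈ Finset.range M, ∫ s in (m:ℝ)..((m:ℝ)+1), gg k α ((q:ℝ)*s + r)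
        = ∫ s in (0:ℝ)..(M:ℝ), gg k α ((q:ℝ)*s + r) := by
      have hthis := intervalIntegral.sum_integral_adjacent_intervals
        (a := fun i : ℕ => (i:ℝ)) (n := M)
        (f := fun s => gg k α ((q:ℝ)*s + r)) (μ := MeasureTheory.volume)
        (fun i _ => by
          show IntervalIntegrable _ MeasureTheory.volume (i:ℝ) ((i+1:ℕ):ℝ)
          have e : ((i+1:ℕ):ℝ) = (i:ℝ)+1 := by push_cast; ring
          rw [e]
          exact hint i ((i:ℝ)+1) (Nat.cast_nonneg i) (by linarith))
      simp only [Nat.cast_add, Nat.cast_one, Nat.cast_zero] at hthis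
      exact hthis
    rw [hadj]
    have hsub : ∫ s in (0:ℝ)..(M:ℝ), gg k α ((q:ℝ)*s + r)
        = (q:ℝ)⁻¹ * ∫ t in ((q:ℝ)*0 + r)..((q:ℝ)*M + r), gg k α t := by
      rw [intervalIntegral.integral_comp_mul_add (gg k α) hqR.ne' (r:ℝ)]
      simp [smul_eq_mul]
    rw [hsub]
    congr 1
    rw [show (q:ℝ)*0 + r = (r:ℝ) by ring]
    exact Ik_FTC k h1α hr1 (by nlinarith [mul_nonneg hqR.le (Nat.cast_nonneg (α := ℝ) M)])
  -- rewrite Hk via reindexing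
  set MM : ℕ → ℕ := fun N => (N + q - r)/q with hMMdef
  have hHk : ∀ x : ℝ, Hk k α r q x = ∑ m ∈ Finset.range (MM ⌊x⌋₊), h m := by
    intro x
    have hre := sum_reindex hr hrq ⌊x⌋₊ (fun n => gg k α (n:ℝ))
    simp only [gg] at hre
    unfold Hk
    rw [hre]
    apply Finset.sum_congr rfl
    intro m _
    simp only [hh, gg]
    congr 1 <;> push_cast <;> ring
  have hF : ∀ x : ℝ, Hk k α r q x - Ik k x α / q
      = (∑ m ∈ Finset.range (MM ⌊x⌋₊), b m)
        + (q:ℝ)⁻¹ * (Ik k ((q:ℝ)*(MM ⌊x⌋₊) + r) α - Ik k x α)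
        - (q:ℝ)⁻¹ * Ik k (r:ℝ) α := by
    intro x
    rw [hHk x, key (MM ⌊x⌋₊), div_eq_mul_inv]
    ring
  have hMMtop : Tendsto (fun N : ℕ => MM N) atTop atTop := by
    apply tendsto_atTop_atTop.mpr
    intro bd
    exact ⟨q*bd + r, fun N hN => le_of_lt ((mem_iff hr hrq N bd).mp hN)⟩
  have hfloor : Tendsto (fun x : ℝ => ⌊x⌋₊) atTop atTop := tendsto_nat_floor_atTop
  have hpart1 : Tendsto (fun x : ℝ => ∑ m ∈ Finset.range (MM ⌊x⌋₊), b m) atTop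
      (nhds (∑' m, b m)) :=
    (hb_sum.hasSum.tendsto_sum_nat).comp (hMMtop.comp hfloor)
  have hbound : ∀ᶠ x : ℝ in atTop,
      0 ≤ Ik k ((q:ℝ)*(MM ⌊x⌋₊) + r) α - Ik k x α ∧
      Ik k ((q:ℝ)*(MM ⌊x⌋₊) + r) α - Ik k x α ≤ (q:ℝ) * gg k α x := by
    filter_upwards [eventually_ge_atTop T] with x hx
    have hx1 : (1:ℝ) ≤ x := le_trans (le_trans one_le_two hT2) hx
    have hx0 : (0:ℝ) ≤ x := by linarith
    set N := ⌊x⌋₊ with hNdef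
    set M := MM N with hMdef
    have hNx : (N:ℝ) ≤ x := Nat.floor_le hx0
    have hxN1 : x < (N:ℝ) + 1 := Nat.lt_floor_add_one x
    have hNP : N < q*M + r := by
      by_contra hcon
      push_neg at hcon
      exact absurd ((mem_iff hr hrq N M).mp hcon) (lt_irrefl M)
    have hPle : q*M + r ≤ N + q := by
      rcases Nat.eq_zero_or_pos M with h0 | hMpos
      · rw [h0]; omega
      · obtain ⟨M', hM'⟩ : ∃ M', M = M' + 1 := ⟨M-1, by omega⟩
        have h2 : q*M' + r ≤ N := (mem_iff hr hrq N M').mpr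
          (lt_of_lt_of_le (Nat.lt_succ_self M') (le_of_eq hM'.symm))
        have h3 : q*(M'+1) = q*M' + q := by ring
        rw [hM']
        omega
    have hxP : x ≤ (q:ℝ)*M + r := by
      have hc : ((N:ℕ):ℝ) + 1 ≤ ((q*M + r : ℕ):ℝ) := by exact_mod_cast hNP
      push_cast at hc
      linarith
    have hPxq : (q:ℝ)*M + r ≤ x + q := by
      have hc : ((q*M + r : ℕ):ℝ) ≤ (N:ℝ) + q := by exact_mod_cast hPle
      push_cast at hc; linarith
    have hFTC : Ik k ((q:ℝ)*M + r) α - Ik k x α = ∫ t in x..((q:ℝ)*M + r), gg k α t :=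
      (Ik_FTC k h1α hx1 hxP).symm
    constructor
    · rw [hFTC]
      apply intervalIntegral.integral_nonneg hxP
      intro t ht
      exact gg_nonneg k α (le_trans hx1 ht.1)
    · rw [hFTC]
      have hmono := intervalIntegral.integral_mono_on hxP (gg_intble k α hx1 hxP)
        (intervalIntegrable_const (c := gg k α x))
        (fun t ht => gg_anti k hα0 (Set.mem_Ici.mpr hx)
          (Set.mem_Ici.mpr (le_trans hx ht.1)) ht.1)
      have hconst : ∫ _t in x..((q:ℝ)*M + r), gg k α x = ((q:ℝ)*M + r - x) * gg k α x := by
        simp [smul_eq_mul]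
      rw [hconst] at hmono
      have hlast : ((q:ℝ)*M + r - x) * gg k α x ≤ q * gg k α x :=
        mul_le_mul_of_nonneg_right (by linarith) (gg_nonneg k α hx1)
      linarith
  have hq_gg : Tendsto (fun x : ℝ => (q:ℝ) * gg k α x) atTop (nhds 0) := by
    simpa using (gg_tendsto k hα0).const_mul (q:ℝ)
  have hφ : Tendsto (fun x : ℝ => Ik k ((q:ℝ)*(MM ⌊x⌋₊) + r) α - Ik k x α) atTop (nhds 0) :=
    squeeze_zero' (hbound.mono (fun x hb2 => hb2.1)) (hbound.mono (fun x hb2 => hb2.2)) hq_gg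
  have hpart2 : Tendsto (fun x : ℝ => (q:ℝ)⁻¹ * (Ik k ((q:ℝ)*(MM ⌊x⌋₊) + r) α - Ik k x α))
      atTop (nhds 0) := by
    simpa using hφ.const_mul (q:ℝ)⁻¹
  refine ⟨(∑' m, b m) + 0 - (q:ℝ)⁻¹ * Ik k (r:ℝ) α, ?_⟩
  have hfin := (hpart1.add hpart2).sub (tendsto_const_nhds (x := (q:ℝ)⁻¹ * Ik k (r:ℝ) α))
  exact Tendsto.congr (fun x => (hF x).symm) hfin
end

section
/- For positive integers r ≤ m, q and α ∈ (0,1), k ∈ ℕ, the distribution relation ∑_{j=0}^{q−1} ζ_k(α, r + j·m, m·q) = ζ_k(α, r, m) holds. -/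
open Filter Real Finset

lemma key (m q r n : ℕ) (hm : 0 < m) (hq : 0 < q) (hrm : r ≤ m) (a : ℝ) :
    (∑ j ∈ Finset.range q, if n % (m * q) = (r + j * m) % (m * q) then a else 0)
      = if n % m = r % m then a else 0 := by
  have hmq : 0 < m * q := Nat.mul_pos hm hq
  by_cases hnr : n % m = r % m
  · rw [if_pos hnr]
    set d := n % (m * q) with hd
    have hdlt : d < m * q := Nat.mod_lt _ hmq
    have hdm : d % m = r % m := by
      rw [hd, Nat.mod_mod_of_dvd _ ⟨q, rfl⟩, hnr]
    set e := d + m * q - r with he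
    have hre : r ≤ d + m * q := by nlinarith [Nat.le_mul_of_pos_right m hq]
    have hme : m ∣ e := by
      have h1 : r ≡ d + m * q [MOD m] := by
        have h2 : (d + m * q) % m = d % m := Nat.add_mul_mod_self_left d m q
        exact (hdm.symm.trans h2.symm : Nat.ModEq m r (d + m * q))
      exact (Nat.modEq_iff_dvd' hre).mp h1
    set j₀ := (e / m) % q with hj₀
    have hj₀q : j₀ < q := Nat.mod_lt _ hq
    have h1 : e % (m * q) = m * j₀ := by
      conv_lhs => rw [← Nat.mul_div_cancel' hme]
      rw [Nat.mul_mod_mul_left]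
    have h3 : r + e = d + m * q := by omega
    have h2 : (r + j₀ * m) % (m * q) = d := by
      have h4 : r + e % (m * q) ≡ r + e [MOD m * q] :=
        (Nat.mod_modEq e (m * q)).add_left r
      have h5 : (r + e % (m * q)) % (m * q) = (r + e) % (m * q) := h4
      rw [mul_comm j₀ m, ← h1, h5, h3, Nat.add_mod_right, Nat.mod_eq_of_lt hdlt]
    refine Finset.sum_eq_single_of_mem j₀ (Finset.mem_range.mpr hj₀q) ?_ |>.trans
      (if_pos h2.symm)
    intro j hj hne
    rw [if_neg]
    intro hc
    apply hne
    have hjq : j < q := Finset.mem_range.mp hj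
    have : (r + j * m) % (m * q) = (r + j₀ * m) % (m * q) := by rw [h2, ← hc]
    have hmod : j * m ≡ j₀ * m [MOD m * q] :=
      Nat.ModEq.add_left_cancel' r this
    have : m * (j % q) = m * (j₀ % q) := by
      have := hmod
      rwa [Nat.ModEq, mul_comm j m, mul_comm j₀ m, Nat.mul_mod_mul_left,
        Nat.mul_mod_mul_left] at this
    have := Nat.eq_of_mul_eq_mul_left hm this
    rwa [Nat.mod_eq_of_lt hjq, Nat.mod_eq_of_lt hj₀q] at this
  · rw [if_neg hnr]
    refine Finset.sum_eq_zero fun j hj => if_neg ?_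
    intro h
    apply hnr
    have := congrArg (· % m) h
    simpa [Nat.mod_mod_of_dvd _ (⟨q, rfl⟩ : m ∣ m * q), Nat.add_mul_mod_self_right]
      using this

/-- `∑_{j=0}^{q-1} ζ_k(α, r+jm, mq) = ζ_k(α, r, m)`. -/
theorem stmt5 (k : ℕ) (α : ℝ) (hα : α ∈ Set.Ioo (0 : ℝ) 1) (r m q : ℕ)
    (hr : 0 < r) (hrm : r ≤ m) (hq : 0 < q)
    (Z : ℕ → ℝ) (W : ℝ)
    (hZ : ∀ j ∈ Finset.range q,
      Tendsto (fun x : ℝ => Hk k α (r + j * m) (m * q) x - Ik k x α / (m * q)) atTop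
        (nhds (Z j)))
    (hW : Tendsto (fun x : ℝ => Hk k α r m x - Ik k x α / m) atTop (nhds W)) :
    ∑ j ∈ Finset.range q, Z j = W := by
  have hm : 0 < m := hr.trans_le hrm
  have hHk : ∀ x : ℝ, ∑ j ∈ Finset.range q, Hk k α (r + j * m) (m * q) x
      = Hk k α r m x := by
    intro x
    simp only [Hk]
    rw [Finset.sum_comm]
    exact Finset.sum_congr rfl fun n _ => key m q r n hm hq hrm _
  have hsum : Tendsto
      (fun x : ℝ => ∑ j ∈ Finset.range q,
        (Hk k α (r + j * m) (m * q) x - Ik k x α / (m * q))) atTop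
      (nhds (∑ j ∈ Finset.range q, Z j)) := tendsto_finset_sum _ hZ
  have heq : (fun x : ℝ => ∑ j ∈ Finset.range q,
      (Hk k α (r + j * m) (m * q) x - Ik k x α / (m * q)))
      = fun x : ℝ => Hk k α r m x - Ik k x α / m := by
    funext x
    rw [Finset.sum_sub_distrib, hHk x, Finset.sum_const, Finset.card_range]
    congr 1
    rw [nsmul_eq_mul]
    have hm' : (m : ℝ) ≠ 0 := Nat.cast_ne_zero.mpr hm.ne'
    have hq' : (q : ℝ) ≠ 0 := Nat.cast_ne_zero.mpr hq.ne'
    field_simp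
  rw [heq] at hsum
  exact tendsto_nhds_unique hsum hW
end

section
/- If d is a common divisor of positive integers r and q, then for α ∈ (0,1) and k ∈ ℕ: ζ_k(α,r,q) = ∑_{j=0}^{k} C(k,j) (log d)^{k−j} / d^α · ζ_j(α, r/d, q/d). -/
open Filter Real Finset

lemma stmt7_coeff_id (k i j : ℕ) (hij : i ≤ j) (hjk : j ≤ k) :
    (Nat.choose k j : ℝ) * (Nat.factorial j : ℝ) / (Nat.factorial (j - i) : ℝ) =
      (Nat.factorial k : ℝ) / (Nat.factorial (k - i) : ℝ) * (Nat.choose (k - i) (j - i)) := by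
  have h1 : k.choose j * j.factorial * (k - j).factorial = k.factorial :=
    Nat.choose_mul_factorial_mul_factorial hjk
  have h2 : (k - i).choose (j - i) * (j - i).factorial * (k - j).factorial = (k - i).factorial := by
    have := Nat.choose_mul_factorial_mul_factorial (Nat.sub_le_sub_right hjk i)
    rwa [show k - i - (j - i) = k - j by omega] at this
  have hN : (k.choose j * j.factorial) * (k - i).factorial
      = k.factorial * ((k - i).choose (j - i) * (j - i).factorial) := by
    have hpos : 0 < (k - j).factorial := Nat.factorial_pos _
    apply Nat.eq_of_mul_eq_mul_right hpos
    calc k.choose j * j.factorial * (k - i).factorial * (k - j).factorial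
        = (k.choose j * j.factorial * (k - j).factorial) * (k - i).factorial := by ring
      _ = k.factorial * (k - i).factorial := by rw [h1]
      _ = k.factorial * ((k - i).choose (j - i) * (j - i).factorial * (k - j).factorial) := by
          rw [h2]
      _ = k.factorial * ((k - i).choose (j - i) * (j - i).factorial) * (k - j).factorial := by ring
  have hR : ((k.choose j : ℝ) * j.factorial) * (k - i).factorial
      = (k.factorial : ℝ) * ((k - i).choose (j - i) * (j - i).factorial) := by
    exact_mod_cast congrArg (Nat.cast (R := ℝ)) hN
  have f1 : ((j - i).factorial : ℝ) ≠ 0 := Nat.cast_ne_zero.2 (Nat.factorial_ne_zero _)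
  have f2 : (((k - i)).factorial : ℝ) ≠ 0 := Nat.cast_ne_zero.2 (Nat.factorial_ne_zero _)
  field_simp
  linarith [hR]

lemma stmt7_sum_id (k : ℕ) (D L t : ℝ) :
    ∑ j ∈ range (k + 1), (Nat.choose k j : ℝ) * D ^ (k - j) *
      ∑ i ∈ range (j + 1),
        (-1 : ℝ) ^ i * ((Nat.factorial j : ℝ) / (Nat.factorial (j - i) : ℝ)) * L ^ (j - i) / t ^ (i + 1)
    = ∑ i ∈ range (k + 1),
        (-1 : ℝ) ^ i * ((Nat.factorial k : ℝ) / (Nat.factorial (k - i) : ℝ)) * (D + L) ^ (k - i) / t ^ (i + 1) := by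
  simp_rw [Finset.mul_sum]
  simp_rw [Finset.range_eq_Ico]
  rw [← Finset.sum_Ico_Ico_comm 0 (k+1)
    (fun i j => (Nat.choose k j : ℝ) * D ^ (k - j) *
      ((-1 : ℝ) ^ i * ((Nat.factorial j : ℝ) / (Nat.factorial (j - i) : ℝ)) * L ^ (j - i) / t ^ (i + 1)))]
  apply Finset.sum_congr rfl
  intro i hi
  rw [Finset.mem_Ico] at hi
  have hik : i ≤ k := by omega
  rw [Finset.sum_Ico_eq_sum_range]
  have hcount : k + 1 - i = (k - i) + 1 := by omega
  rw [hcount]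
  have : ∀ m ∈ range ((k - i) + 1),
      (Nat.choose k (i + m) : ℝ) * D ^ (k - (i + m)) *
        ((-1 : ℝ) ^ i * ((Nat.factorial (i+m) : ℝ) / (Nat.factorial (i + m - i) : ℝ)) * L ^ (i + m - i) / t ^ (i + 1))
      = ((-1 : ℝ) ^ i * ((Nat.factorial k : ℝ) / (Nat.factorial (k - i) : ℝ)) / t ^ (i + 1)) *
          ((Nat.choose (k - i) m : ℝ) * D ^ (k - i - m) * L ^ m) := by
    intro m hm
    rw [Finset.mem_range] at hm
    have h1 : i ≤ i + m := Nat.le_add_right _ _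
    have h2 : i + m ≤ k := by omega
    have := stmt7_coeff_id k i (i + m) h1 h2
    rw [show i + m - i = m by omega] at this ⊢
    rw [show k - (i + m) = k - i - m by omega]
    calc (Nat.choose k (i+m) : ℝ) * D ^ (k - i - m) *
          ((-1 : ℝ) ^ i * ((Nat.factorial (i+m) : ℝ) / (Nat.factorial m : ℝ)) * L ^ m / t ^ (i + 1))
        = ((Nat.choose k (i+m) : ℝ) * (Nat.factorial (i+m) : ℝ) / (Nat.factorial m : ℝ)) *
            (D ^ (k - i - m) * ((-1 : ℝ) ^ i * L ^ m / t ^ (i + 1))) := by ring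
      _ = ((Nat.factorial k : ℝ) / (Nat.factorial (k - i) : ℝ) * (Nat.choose (k - i) m)) *
            (D ^ (k - i - m) * ((-1 : ℝ) ^ i * L ^ m / t ^ (i + 1))) := by rw [this]
      _ = ((-1 : ℝ) ^ i * ((Nat.factorial k : ℝ) / (Nat.factorial (k - i) : ℝ)) / t ^ (i + 1)) *
            ((Nat.choose (k - i) m : ℝ) * D ^ (k - i - m) * L ^ m) := by ring
  rw [Finset.sum_congr rfl this, ← Finset.mul_sum]
  have hbin : ∑ m ∈ range ((k - i) + 1), (Nat.choose (k - i) m : ℝ) * D ^ (k - i - m) * L ^ m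
      = (D + L) ^ (k - i) := by
    rw [add_comm D L, add_pow]
    apply Finset.sum_congr rfl
    intro m hm
    ring
  rw [hbin]
  ring

lemma stmt7_Ik_scale (k : ℕ) (α : ℝ) (d : ℕ) (hd : 0 < d) (x : ℝ) (hx : 0 < x) :
    Ik k x α = (d : ℝ) ^ (1 - α) *
      ∑ j ∈ range (k + 1), (Nat.choose k j : ℝ) * Real.log d ^ (k - j) * Ik j (x / d) α := by
  have hd0 : (0 : ℝ) < (d : ℝ) := by exact_mod_cast hd
  have hxd : (0 : ℝ) < x / d := div_pos hx hd0
  have hpow : (d : ℝ) ^ (1 - α) * (x / d) ^ (1 - α) = x ^ (1 - α) := by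
    rw [← Real.mul_rpow hd0.le hxd.le, mul_div_cancel₀ _ hd0.ne']
  have hlog : Real.log d + Real.log (x / d) = Real.log x := by
    rw [Real.log_div hx.ne' hd0.ne']; ring
  simp only [Ik]
  symm
  calc (d : ℝ) ^ (1 - α) * ∑ j ∈ range (k + 1), (Nat.choose k j : ℝ) * Real.log d ^ (k - j) *
        ((x / d) ^ (1 - α) * ∑ i ∈ range (j + 1),
          (-1 : ℝ) ^ i * ((Nat.factorial j : ℝ) / (Nat.factorial (j - i) : ℝ)) *
            Real.log (x / d) ^ (j - i) / (1 - α) ^ (i + 1))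
      = ((d : ℝ) ^ (1 - α) * (x / d) ^ (1 - α)) *
          ∑ j ∈ range (k + 1), (Nat.choose k j : ℝ) * Real.log d ^ (k - j) *
            ∑ i ∈ range (j + 1),
              (-1 : ℝ) ^ i * ((Nat.factorial j : ℝ) / (Nat.factorial (j - i) : ℝ)) *
                Real.log (x / d) ^ (j - i) / (1 - α) ^ (i + 1) := by
        rw [Finset.mul_sum, Finset.mul_sum]
        apply Finset.sum_congr rfl; intro j _; ring
    _ = x ^ (1 - α) * ∑ i ∈ range (k + 1),
          (-1 : ℝ) ^ i * ((Nat.factorial k : ℝ) / (Nat.factorial (k - i) : ℝ)) *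
            Real.log x ^ (k - i) / (1 - α) ^ (i + 1) := by
        rw [hpow, stmt7_sum_id k (Real.log d) (Real.log (x / d)) (1 - α), hlog]

lemma stmt7_Hk_scale (k : ℕ) (α : ℝ) (r q d : ℕ) (hd : 0 < d) (hdr : d ∣ r) (hdq : d ∣ q)
    (x : ℝ) (hx : 0 ≤ x) :
    Hk k α r q x = ∑ j ∈ range (k + 1),
      (Nat.choose k j : ℝ) * Real.log d ^ (k - j) / (d : ℝ) ^ α * Hk j α (r / d) (q / d) (x / d) := by
  obtain ⟨r', rfl⟩ := hdr
  obtain ⟨q', rfl⟩ := hdq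
  have hd0 : (0 : ℝ) < (d : ℝ) := by exact_mod_cast hd
  have hxd : (0 : ℝ) ≤ x / d := div_nonneg hx hd0.le
  simp only [Hk, Nat.mul_div_cancel_left _ hd]
  simp only [← Finset.sum_filter]
  simp only [Finset.mul_sum]
  rw [Finset.sum_comm]
  refine Finset.sum_nbij' (fun n => n / d) (fun m => d * m) ?_ ?_ ?_ ?_ ?_
  · intro n hn
    simp only [Finset.mem_filter, Finset.mem_Icc] at hn ⊢
    obtain ⟨⟨h1, h2⟩, h3⟩ := hn
    have hdn : d ∣ n := by
      have h4 : d ∣ n % (d * q') := by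
        rw [h3]
        exact (Nat.dvd_mod_iff ⟨q', rfl⟩).2 ⟨r', rfl⟩
      exact (Nat.dvd_mod_iff ⟨q', rfl⟩).1 h4
    obtain ⟨m, rfl⟩ := hdn
    have hm1 : 1 ≤ m := by
      rcases Nat.eq_zero_or_pos m with h | h
      · subst h; simp at h1
      · exact h
    rw [Nat.mul_div_cancel_left m hd]
    refine ⟨⟨hm1, ?_⟩, ?_⟩
    · apply Nat.le_floor
      rw [le_div_iff₀ hd0]
      have hle : ((d * m : ℕ) : ℝ) ≤ x :=
        le_trans (by exact_mod_cast h2) (Nat.floor_le hx)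
      push_cast at hle ⊢
      linarith
    · have h5 := h3
      rw [Nat.mul_mod_mul_left, Nat.mul_mod_mul_left] at h5
      exact Nat.eq_of_mul_eq_mul_left hd h5
  · intro m hm
    simp only [Finset.mem_filter, Finset.mem_Icc] at hm ⊢
    obtain ⟨⟨h1, h2⟩, h3⟩ := hm
    refine ⟨⟨Nat.one_le_iff_ne_zero.2 (by positivity), ?_⟩, ?_⟩
    · apply Nat.le_floor
      have : (m : ℝ) ≤ x / d := (Nat.le_floor_iff hxd).1 h2
      push_cast
      calc (d : ℝ) * m ≤ d * (x / d) := by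
            apply mul_le_mul_of_nonneg_left this hd0.le
        _ = x := by field_simp
    · rw [Nat.mul_mod_mul_left, Nat.mul_mod_mul_left, h3]
  · intro n hn
    simp only [Finset.mem_filter, Finset.mem_Icc] at hn
    obtain ⟨⟨h1, h2⟩, h3⟩ := hn
    have hdn : d ∣ n := by
      have h4 : d ∣ n % (d * q') := by
        rw [h3]; exact (Nat.dvd_mod_iff ⟨q', rfl⟩).2 ⟨r', rfl⟩
      exact (Nat.dvd_mod_iff ⟨q', rfl⟩).1 h4
    exact Nat.mul_div_cancel' hdn
  · intro m hm
    exact Nat.mul_div_cancel_left m hd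
  · intro n hn
    simp only [Finset.mem_filter, Finset.mem_Icc] at hn
    obtain ⟨⟨h1, h2⟩, h3⟩ := hn
    have hdn : d ∣ n := by
      have h4 : d ∣ n % (d * q') := by
        rw [h3]; exact (Nat.dvd_mod_iff ⟨q', rfl⟩).2 ⟨r', rfl⟩
      exact (Nat.dvd_mod_iff ⟨q', rfl⟩).1 h4
    obtain ⟨m, rfl⟩ := hdn
    simp only [Nat.mul_div_cancel_left m hd]
    have hm1 : 1 ≤ m := Nat.one_le_iff_ne_zero.2 (fun h => by simp [h] at h1)
    have hm0 : (0 : ℝ) < (m : ℝ) := by exact_mod_cast hm1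
    have hcast : ((d * m : ℕ) : ℝ) = (d : ℝ) * m := by push_cast; ring
    rw [hcast, Real.log_mul hd0.ne' hm0.ne', Real.mul_rpow hd0.le hm0.le]
    rw [add_comm (Real.log d) (Real.log m), add_pow, Finset.sum_div]
    apply Finset.sum_congr rfl
    intro j hj
    have hda : (d : ℝ) ^ α ≠ 0 := (Real.rpow_pos_of_pos hd0 α).ne'
    have hma : (m : ℝ) ^ α ≠ 0 := (Real.rpow_pos_of_pos hm0 α).ne'
    field_simp

/-- If `d ∣ r` and `d ∣ q` then
`ζ_k(α,r,q) = ∑_{j=0}^{k} C(k,j) (log d)^{k-j} / d^α · ζ_j(α, r/d, q/d)`. -/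
theorem stmt7 (k : ℕ) (α : ℝ) (hα : α ∈ Set.Ioo (0 : ℝ) 1) (r q d : ℕ)
    (hr : 0 < r) (hq : 0 < q) (hdr : d ∣ r) (hdq : d ∣ q)
    (Z : ℝ) (W : ℕ → ℝ)
    (hZ : Tendsto (fun x : ℝ => Hk k α r q x - Ik k x α / q) atTop (nhds Z))
    (hW : ∀ j ∈ Finset.range (k + 1),
      Tendsto (fun x : ℝ => Hk j α (r / d) (q / d) x - Ik j x α / (q / d : ℕ)) atTop
        (nhds (W j))) :
    Z = ∑ j ∈ Finset.range (k + 1),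
        (Nat.choose k j : ℝ) * Real.log d ^ (k - j) / (d : ℝ) ^ α * W j := by
  have hd : 0 < d := by
    rcases Nat.eq_zero_or_pos d with h | h
    · subst h; obtain ⟨c, rfl⟩ := hdr; simp at hr
    · exact h
  have hd0 : (0 : ℝ) < (d : ℝ) := by exact_mod_cast hd
  have hq0 : (0 : ℝ) < (q : ℝ) := by exact_mod_cast hq
  set c : ℕ → ℝ := fun j => (Nat.choose k j : ℝ) * Real.log d ^ (k - j) / (d : ℝ) ^ α with hc
  -- eventual identity
  have key : ∀ x : ℝ, 1 ≤ x →
      Hk k α r q x - Ik k x α / q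
        = ∑ j ∈ Finset.range (k + 1),
            c j * (Hk j α (r / d) (q / d) (x / d) - Ik j (x / d) α / ((q / d : ℕ) : ℝ)) := by
    intro x hx
    have hx0 : (0 : ℝ) < x := lt_of_lt_of_le one_pos hx
    have hqd : ((q / d : ℕ) : ℝ) = (q : ℝ) / (d : ℝ) := by
      rw [Nat.cast_div hdq (by exact_mod_cast hd0.ne')]
    have hsplit : ∑ j ∈ Finset.range (k + 1),
        c j * (Hk j α (r / d) (q / d) (x / d) - Ik j (x / d) α / ((q / d : ℕ) : ℝ))
        = (∑ j ∈ Finset.range (k + 1), c j * Hk j α (r / d) (q / d) (x / d))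
          - ∑ j ∈ Finset.range (k + 1), c j * (Ik j (x / d) α / ((q / d : ℕ) : ℝ)) := by
      rw [← Finset.sum_sub_distrib]
      apply Finset.sum_congr rfl; intro j _; ring
    rw [hsplit]
    have hH : ∑ j ∈ Finset.range (k + 1), c j * Hk j α (r / d) (q / d) (x / d)
        = Hk k α r q x := by
      rw [stmt7_Hk_scale k α r q d hd hdr hdq x hx0.le]
    have hI : ∑ j ∈ Finset.range (k + 1), c j * (Ik j (x / d) α / ((q / d : ℕ) : ℝ))
        = Ik k x α / q := by
      rw [stmt7_Ik_scale k α d hd x hx0]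
      have hda : (0 : ℝ) < (d : ℝ) ^ α := Real.rpow_pos_of_pos hd0 α
      have hd1α : (d : ℝ) ^ (1 - α) = (d : ℝ) / (d : ℝ) ^ α := by
        rw [Real.rpow_sub hd0, Real.rpow_one]
      rw [hd1α, Finset.mul_sum, Finset.sum_div]
      apply Finset.sum_congr rfl
      intro j _
      simp only [hc, hqd]
      field_simp
    rw [hH, hI]
  have hdiv : Tendsto (fun x : ℝ => x / (d : ℝ)) atTop atTop :=
    Tendsto.atTop_div_const hd0 tendsto_id
  have hsum : Tendsto
      (fun x : ℝ => ∑ j ∈ Finset.range (k + 1),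
        c j * (Hk j α (r / d) (q / d) (x / d) - Ik j (x / d) α / ((q / d : ℕ) : ℝ)))
      atTop (nhds (∑ j ∈ Finset.range (k + 1), c j * W j)) := by
    apply tendsto_finset_sum
    intro j hj
    exact ((hW j hj).comp hdiv).const_mul (c j)
  have hZ' : Tendsto (fun x : ℝ => Hk k α r q x - Ik k x α / q) atTop
      (nhds (∑ j ∈ Finset.range (k + 1), c j * W j)) := by
    apply hsum.congr'
    filter_upwards [eventually_ge_atTop (1 : ℝ)] with x hx
    exact (key x hx).symm
  exact tendsto_nhds_unique hZ hZ'
end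

section
/- For α ∈ (0,1) and positive integers r ≤ q, the partial zeta function ζ(s;r,q) = ∑_{n ≡ r mod q} n^{−s} (analytically continued to Re(s) > 0, s ≠ 1) has Taylor expansion ζ(s;r,q) = ∑_{m=0}^{∞} ((−1)^m/m!) ζ_m(α,r,q) (s−α)^m, valid for |s−α| < |α−1|. -/
open Filter Real Finset HurwitzZeta

/-- The partial zeta function `ζ(s; r, q) = q^{-s} ζ(s, r/q)`, analytically continued. -/
noncomputable def partialZeta (r q : ℕ) (s : ℂ) : ℂ :=
  (q : ℂ) ^ (-s) * hurwitzZeta (↑((r : ℝ) / q)) s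

noncomputable def st8S (r q N : ℕ) (s : ℂ) : ℂ :=
  ∑ n ∈ Finset.Icc 1 N, if n % q = r % q then (n:ℂ)^(-s) else 0

noncomputable def st8G (r q : ℕ) (x : ℝ) (s : ℂ) : ℂ :=
  st8S r q ⌊x⌋₊ s - (x:ℂ)^(1-s)/((1-s)*q)

noncomputable def st8F (r q : ℕ) (x : ℝ) (m : ℕ) (s : ℂ) : ℂ :=
  (∑ n ∈ Finset.Icc 1 ⌊x⌋₊, if n % q = r % q then (-(Real.log n : ℂ))^m * (n:ℂ)^(-s) else 0)
  - (∑ i ∈ Finset.range (m+1), (m.descFactorial i : ℂ) * (-(Real.log x : ℂ))^(m-i)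
      * (x:ℂ)^(1-s) * ((1-s)^(i+1))⁻¹) / q

noncomputable def st8u (r q k : ℕ) (s : ℂ) : ℂ :=
  ((q*k + r : ℕ):ℂ)^(-s) - (((q*(k+1) : ℕ):ℂ)^(1-s) - ((q*k : ℕ):ℂ)^(1-s)) / ((1-s) * q)

noncomputable def st8K (r q : ℕ) (x : ℝ) : ℕ := (⌊x⌋₊ + q - r)/q

def st8Omega : Set ℂ := {s | 0 < s.re ∧ s ≠ 1}

lemma st8Omega_open : IsOpen st8Omega :=
  (isOpen_lt continuous_const Complex.continuous_re).inter isOpen_ne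

lemma st8_iteratedDeriv_chain {U : Set ℂ} (hU : IsOpen U) (F : ℕ → ℂ → ℂ)
    (h : ∀ m, ∀ s ∈ U, HasDerivAt (F m) (F (m+1) s) s) :
    ∀ m, ∀ s ∈ U, iteratedDeriv m (F 0) s = F m s := by
  intro m
  induction m with
  | zero => intro s _; simp [iteratedDeriv_zero]
  | succ m ih =>
    intro s hs
    rw [iteratedDeriv_succ]
    have hev : iteratedDeriv m (F 0) =ᶠ[nhds s] F m :=
      Filter.eventually_of_mem (hU.mem_nhds hs) (fun t ht => ih t ht)
    rw [hev.deriv_eq, (h m s hs).deriv]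

lemma st8_TLU_iteratedDeriv {F : ℝ → ℂ → ℂ} {f : ℂ → ℂ} {U : Set ℂ} (hU : IsOpen U)
    (h : TendstoLocallyUniformlyOn F f atTop U)
    (hd : ∀ᶠ x in atTop, DifferentiableOn ℂ (F x) U) (m : ℕ) :
    TendstoLocallyUniformlyOn (fun x s => iteratedDeriv m (F x) s) (iteratedDeriv m f) atTop U ∧
      (∀ᶠ x in (atTop : Filter ℝ), DifferentiableOn ℂ (iteratedDeriv m (F x)) U) := by
  induction m with
  | zero =>
    refine ⟨?_, ?_⟩
    · simpa only [iteratedDeriv_zero] using h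
    · filter_upwards [hd] with x hx
      simpa only [iteratedDeriv_zero] using hx
  | succ m ih =>
    obtain ⟨h', hd'⟩ := ih
    constructor
    · have := h'.deriv hd' hU
      rw [show (deriv ∘ fun x s => iteratedDeriv m (F x) s) = fun x s => iteratedDeriv (m+1) (F x) s by
        funext x; rw [Function.comp]; exact (iteratedDeriv_succ).symm,
        ← iteratedDeriv_succ] at this
      exact this
    · filter_upwards [hd'] with x hx
      rw [iteratedDeriv_succ]
      exact (((hx.analyticOnNhd hU).deriv).differentiableOn)

lemma st8_preconnected : IsPreconnected st8Omega := by
  have hA : Convex ℝ {s : ℂ | 0 < s.re ∧ s.re < 1} :=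
    (convex_halfSpace_re_gt 0).inter (convex_halfSpace_re_lt 1)
  have hBp : Convex ℝ {s : ℂ | 0 < s.re ∧ 0 < s.im} :=
    (convex_halfSpace_re_gt 0).inter (convex_halfSpace_im_gt 0)
  have hBm : Convex ℝ {s : ℂ | 0 < s.re ∧ s.im < 0} :=
    (convex_halfSpace_re_gt 0).inter (convex_halfSpace_im_lt 0)
  have hC : Convex ℝ {s : ℂ | 1 < s.re} := convex_halfSpace_re_gt 1
  have h1 : IsPreconnected ({s : ℂ | 0 < s.re ∧ s.re < 1} ∪ {s : ℂ | 0 < s.re ∧ 0 < s.im}) := by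
    apply IsPreconnected.union (⟨1/2, 1/2⟩ : ℂ)
    · constructor <;> norm_num
    · constructor <;> norm_num
    · exact hA.isPreconnected
    · exact hBp.isPreconnected
  have h2 : IsPreconnected (({s : ℂ | 0 < s.re ∧ s.re < 1} ∪ {s : ℂ | 0 < s.re ∧ 0 < s.im})
      ∪ {s : ℂ | 0 < s.re ∧ s.im < 0}) := by
    apply IsPreconnected.union (⟨1/2, -1/2⟩ : ℂ)
    · left; constructor <;> norm_num
    · constructor <;> norm_num
    · exact h1
    · exact hBm.isPreconnected
  have h3 : IsPreconnected ((({s : ℂ | 0 < s.re ∧ s.re < 1} ∪ {s : ℂ | 0 < s.re ∧ 0 < s.im})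
      ∪ {s : ℂ | 0 < s.re ∧ s.im < 0}) ∪ {s : ℂ | 1 < s.re}) := by
    apply IsPreconnected.union (⟨2, 1⟩ : ℂ)
    · left; right; constructor <;> norm_num
    · norm_num
    · exact h2
    · exact hC.isPreconnected
  have : st8Omega = (({s : ℂ | 0 < s.re ∧ s.re < 1} ∪ {s : ℂ | 0 < s.re ∧ 0 < s.im})
      ∪ {s : ℂ | 0 < s.re ∧ s.im < 0}) ∪ {s : ℂ | 1 < s.re} := by
    ext z
    simp only [st8Omega, Set.mem_setOf_eq, Set.mem_union]
    constructor
    · rintro ⟨h0, h1⟩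
      rcases lt_trichotomy z.im 0 with him | him | him
      · exact Or.inl (Or.inr ⟨h0, him⟩)
      · rcases lt_trichotomy z.re 1 with hre | hre | hre
        · exact Or.inl (Or.inl (Or.inl ⟨h0, hre⟩))
        · exact absurd (Complex.ext hre him) h1
        · exact Or.inr hre
      · exact Or.inl (Or.inl (Or.inr ⟨h0, him⟩))
    · rintro (((⟨h0, h1⟩ | ⟨h0, h1⟩) | ⟨h0, h1⟩) | h1)
      · exact ⟨h0, fun he => by rw [he] at h1; simp at h1⟩
      · exact ⟨h0, fun he => by rw [he] at h1; simp at h1⟩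
      · exact ⟨h0, fun he => by rw [he] at h1; simp at h1⟩
      · exact ⟨lt_trans one_pos h1, fun he => by rw [he] at h1; simp at h1⟩
  rw [this]
  exact h3

lemma st8K_iff {r q : ℕ} (hr : 0 < r) (hrq : r ≤ q) (N k : ℕ) :
    k < (N + q - r)/q ↔ q*k + r ≤ N := by
  have hq : 0 < q := lt_of_lt_of_le hr hrq
  rw [Nat.lt_iff_add_one_le, Nat.le_div_iff_mul_le hq,
    show (k+1)*q = q*k+q from by ring]
  set t := q*k
  omega

lemma st8_reindex {M : Type*} [AddCommMonoid M] {r q : ℕ} (hr : 0 < r) (hrq : r ≤ q)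
    (N : ℕ) (f : ℕ → M) :
    ∑ n ∈ Finset.Icc 1 N, (if n % q = r % q then f n else 0)
      = ∑ k ∈ Finset.range ((N + q - r)/q), f (q*k + r) := by
  have hq : 0 < q := lt_of_lt_of_le hr hrq
  rw [← Finset.sum_filter]
  refine Finset.sum_nbij' (fun n => (n - r)/q) (fun k => q*k + r) ?_ ?_ ?_ ?_ ?_
  · intro n hn
    simp only [Finset.mem_filter, Finset.mem_Icc] at hn
    obtain ⟨⟨h1, h2⟩, h3⟩ := hn
    have hrn : r ≤ n := by
      by_contra hlt
      push_neg at hlt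
      have hnq : n % q = n := Nat.mod_eq_of_lt (lt_of_lt_of_le hlt hrq)
      rcases eq_or_lt_of_le hrq with he | hl
      · rw [he, Nat.mod_self] at h3; omega
      · rw [Nat.mod_eq_of_lt hl] at h3; omega
    have hdvd : q ∣ n - r := (Nat.modEq_iff_dvd' hrn).mp (Nat.ModEq.symm h3)
    have heq : q * ((n - r)/q) + r = n := by
      rw [Nat.mul_div_cancel' hdvd]; omega
    simp only [Finset.mem_range, st8K_iff hr hrq]
    omega
  · intro k hk
    rw [Finset.mem_range, st8K_iff hr hrq] at hk
    simp only [Finset.mem_filter, Finset.mem_Icc]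
    refine ⟨⟨by omega, hk⟩, ?_⟩
    rw [Nat.mul_add_mod]
  · intro n hn
    simp only [Finset.mem_filter, Finset.mem_Icc] at hn
    obtain ⟨⟨h1, h2⟩, h3⟩ := hn
    have hrn : r ≤ n := by
      by_contra hlt
      push_neg at hlt
      have hnq : n % q = n := Nat.mod_eq_of_lt (lt_of_lt_of_le hlt hrq)
      rcases eq_or_lt_of_le hrq with he | hl
      · rw [he, Nat.mod_self] at h3; omega
      · rw [Nat.mod_eq_of_lt hl] at h3; omega
    have hdvd : q ∣ n - r := (Nat.modEq_iff_dvd' hrn).mp (Nat.ModEq.symm h3)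
    show q * ((n - r)/q) + r = n
    rw [Nat.mul_div_cancel' hdvd]; omega
  · intro k hk
    show (q*k + r - r)/q = k
    rw [Nat.add_sub_cancel, Nat.mul_div_cancel_left _ hq]
  · intro n hn
    simp only [Finset.mem_filter, Finset.mem_Icc] at hn
    obtain ⟨⟨h1, h2⟩, h3⟩ := hn
    have hrn : r ≤ n := by
      by_contra hlt
      push_neg at hlt
      have hnq : n % q = n := Nat.mod_eq_of_lt (lt_of_lt_of_le hlt hrq)
      rcases eq_or_lt_of_le hrq with he | hl
      · rw [he, Nat.mod_self] at h3; omega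
      · rw [Nat.mod_eq_of_lt hl] at h3; omega
    have hdvd : q ∣ n - r := (Nat.modEq_iff_dvd' hrn).mp (Nat.ModEq.symm h3)
    rw [Nat.mul_div_cancel' hdvd]
    congr 1
    omega

lemma st8_decomp {r q : ℕ} (hr : 0 < r) (hrq : r ≤ q) (x : ℝ) {s : ℂ} (hs : s ≠ 1) :
    st8G r q x s = (∑ k ∈ Finset.range (st8K r q x), st8u r q k s)
      + ((((q * st8K r q x : ℕ)):ℂ)^(1-s) - (x:ℂ)^(1-s))/((1-s)*(q:ℂ)) := by
  have h1s : (1:ℂ) - s ≠ 0 := sub_ne_zero.mpr (Ne.symm hs)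
  have key : ∑ k ∈ Finset.range (st8K r q x), st8u r q k s
      = (∑ k ∈ Finset.range (st8K r q x), ((q*k + r : ℕ):ℂ)^(-s))
        - ((q * st8K r q x : ℕ):ℂ)^(1-s)/((1-s)*q) := by
    unfold st8u
    rw [Finset.sum_sub_distrib, ← Finset.sum_div,
      Finset.sum_range_sub (fun k => ((q*k : ℕ):ℂ)^(1-s))]
    simp only [Nat.mul_zero, Nat.cast_zero, Complex.zero_cpow h1s, sub_zero]
  unfold st8G st8S st8K
  rw [st8_reindex hr hrq]
  unfold st8K at key
  rw [key]
  ring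

lemma st8_descFactorial_cast (m i : ℕ) (hi : i ≤ m) :
    ((m.descFactorial i : ℕ):ℝ) = (m.factorial : ℝ) / ((m-i).factorial : ℝ) := by
  rw [eq_div_iff (by exact_mod_cast (m-i).factorial_ne_zero)]
  have h := Nat.factorial_mul_descFactorial hi
  exact_mod_cast (by rw [mul_comm]; exact h : m.descFactorial i * (m-i).factorial = m.factorial)


lemma st8F_part1 {r q : ℕ} (x : ℝ) {α : ℝ} (m : ℕ) :
    (∑ n ∈ Finset.Icc 1 ⌊x⌋₊, if n % q = r % q then (-(Real.log n : ℂ))^m * (n:ℂ)^(-(α:ℂ)) else 0)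
      = (-1:ℂ)^m * ((Hk m α r q x : ℝ):ℂ) := by
  rw [Hk]
  push_cast
  rw [Finset.mul_sum]
  apply Finset.sum_congr rfl
  intro n hn
  simp only [Finset.mem_Icc] at hn
  have hn0 : (0:ℝ) < n := by exact_mod_cast hn.1
  split_ifs with h
  · have hcp : ((n:ℂ))^(-(α:ℂ)) = (((n:ℝ)^(-α) : ℝ) : ℂ) := by
      rw [Complex.ofReal_cpow hn0.le]
      push_cast
      ring_nf
    rw [hcp, Real.rpow_neg hn0.le]
    push_cast
    ring
  · simp

lemma st8F_part2 (x : ℝ) (hx : 0 < x) {α : ℝ} (hα1 : α < 1) (m : ℕ) :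
    (∑ i ∈ Finset.range (m+1), (m.descFactorial i : ℂ) * (-(Real.log x : ℂ))^(m-i)
      * (x:ℂ)^(1-(α:ℂ)) * ((1-(α:ℂ))^(i+1))⁻¹)
      = (-1:ℂ)^m * ((Ik m x α : ℝ):ℂ) := by
  have hxc : ((x:ℂ))^((1:ℂ)-(α:ℂ)) = ((x ^ (1-α) : ℝ) : ℂ) := by
    rw [Complex.ofReal_cpow hx.le]
    push_cast
    ring_nf
  rw [Ik]
  push_cast
  rw [Finset.mul_sum, Finset.mul_sum]
  apply Finset.sum_congr rfl
  intro i hi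
  simp only [Finset.mem_range] at hi
  have hile : i ≤ m := by omega
  have hdF : ((m.descFactorial i : ℕ):ℂ) = (((m.factorial : ℝ) / ((m-i).factorial : ℝ) : ℝ):ℂ) := by
    rw [← st8_descFactorial_cast m i hile]
    norm_cast
  have hsign : (-((Real.log x : ℝ):ℂ))^(m-i)
      = (-1:ℂ)^m * (-1:ℂ)^i * (((Real.log x)^(m-i) : ℝ):ℂ) := by
    rw [neg_pow]
    have h3 : (-1:ℂ)^(m-i) = (-1:ℂ)^m * (-1:ℂ)^i := by
      have h2 : (-1:ℂ)^(m-i) * (-1:ℂ)^i = (-1:ℂ)^m := by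
        rw [← pow_add]; congr 1; omega
      have hinv : (-1:ℂ)^i * (-1:ℂ)^i = 1 := by
        rw [← pow_add, ← two_mul, pow_mul]; norm_num
      calc (-1:ℂ)^(m-i) = (-1:ℂ)^(m-i) * ((-1:ℂ)^i * (-1:ℂ)^i) := by rw [hinv, mul_one]
        _ = ((-1:ℂ)^(m-i) * (-1:ℂ)^i) * (-1:ℂ)^i := by ring
        _ = (-1:ℂ)^m * (-1:ℂ)^i := by rw [h2]
    rw [h3]
    push_cast
    ring
  have h1αc : ((1:ℂ) - (α:ℂ)) ≠ 0 := by
    intro hcon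
    have : (1:ℝ) - α = 0 := by exact_mod_cast hcon
    linarith
  rw [hdF, hsign]
  rw [show ((x:ℂ))^(1-(α:ℂ)) = ((x ^ (1-α) : ℝ) : ℂ) from hxc]
  push_cast
  field_simp

lemma st8F_apply_real {r q : ℕ} (x : ℝ) (hx : 0 < x) {α : ℝ} (hα0 : 0 < α) (hα1 : α < 1)
    (m : ℕ) :
    st8F r q x m (α:ℂ) = (-1:ℂ)^m * (((Hk m α r q x - Ik m x α / q : ℝ)):ℂ) := by
  unfold st8F
  rw [st8F_part1 x m, st8F_part2 x hx hα1 m]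
  push_cast
  ring

-- descFactorial recurrence
lemma st8_dF_rec (m i : ℕ) (hi : i ≤ m) :
    (m+1).descFactorial i = m.descFactorial i + i * m.descFactorial (i-1) := by
  cases i with
  | zero => simp
  | succ j =>
    rw [Nat.succ_descFactorial_succ, Nat.descFactorial_succ, Nat.succ_sub_one]
    have hj : j ≤ m - 1 ∨ j ≤ m := Or.inr (by omega)
    have : m - j + (j+1) = m + 1 := by omega
    nlinarith [Nat.descFactorial_succ m j]

-- the combinatorial key identity
lemma st8_comb (m : ℕ) (L X W : ℂ) (hW : W ≠ 0) :
    ∑ i ∈ Finset.range (m+1),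
      ((0 * X + (m.descFactorial i : ℂ) * (-L)^(m-i) * (-L * X)) * (W^(i+1))⁻¹
        + ((m.descFactorial i : ℂ) * (-L)^(m-i) * X) * (((i:ℂ)+1) * (W^(i+2))⁻¹))
    = ∑ i ∈ Finset.range (m+2), ((m+1).descFactorial i : ℂ) * (-L)^(m+1-i) * X * (W^(i+1))⁻¹ := by
  rw [Finset.sum_add_distrib]
  -- A-part
  have hA : ∑ i ∈ Finset.range (m+1),
      (0 * X + (m.descFactorial i : ℂ) * (-L)^(m-i) * (-L * X)) * (W^(i+1))⁻¹
      = ∑ i ∈ Finset.range (m+1), (m.descFactorial i : ℂ) * (-L)^(m+1-i) * X * (W^(i+1))⁻¹ := by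
    apply Finset.sum_congr rfl
    intro i hi
    simp only [Finset.mem_range] at hi
    have h1 : m+1-i = (m-i)+1 := by omega
    rw [h1, pow_succ]
    ring
  rw [hA]
  have htar := Finset.sum_range_succ
    (fun i => ((m+1).descFactorial i : ℂ) * (-L)^(m+1-i) * X * (W^(i+1))⁻¹) (m+1)
  -- RHS_range(m+1) splits by dF recurrence
  have hsplit : ∑ i ∈ Finset.range (m+1), ((m+1).descFactorial i : ℂ) * (-L)^(m+1-i) * X * (W^(i+1))⁻¹
      = (∑ i ∈ Finset.range (m+1), (m.descFactorial i : ℂ) * (-L)^(m+1-i) * X * (W^(i+1))⁻¹)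
        + ∑ i ∈ Finset.range (m+1), ((i:ℂ) * (m.descFactorial (i-1) : ℂ)) * (-L)^(m+1-i) * X * (W^(i+1))⁻¹ := by
    rw [← Finset.sum_add_distrib]
    apply Finset.sum_congr rfl
    intro i hi
    simp only [Finset.mem_range] at hi
    rw [st8_dF_rec m i (by omega)]
    push_cast
    ring
  -- second piece of hsplit reindexes
  have hre : ∑ i ∈ Finset.range (m+1), ((i:ℂ) * (m.descFactorial (i-1) : ℂ)) * (-L)^(m+1-i) * X * (W^(i+1))⁻¹
      = ∑ j ∈ Finset.range m, (((j:ℂ)+1) * (m.descFactorial j : ℂ)) * (-L)^(m-j) * X * (W^(j+2))⁻¹ := by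
    rw [Finset.sum_range_succ']
    simp only [Nat.cast_zero, zero_mul, Nat.cast_add, Nat.cast_one]
    rw [add_zero]
    apply Finset.sum_congr rfl
    intro j hj
    simp only [Finset.mem_range] at hj
    have h1 : m+1-(j+1) = m-j := by omega
    have h2 : j+1-1 = j := by omega
    rw [h1, h2]
  -- the B part: split last term
  have hB : ∑ i ∈ Finset.range (m+1),
      ((m.descFactorial i : ℂ) * (-L)^(m-i) * X) * (((i:ℂ)+1) * (W^(i+2))⁻¹)
      = (∑ j ∈ Finset.range m, (((j:ℂ)+1) * (m.descFactorial j : ℂ)) * (-L)^(m-j) * X * (W^(j+2))⁻¹)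
        + ((m+1).descFactorial (m+1) : ℂ) * (-L)^(m+1-(m+1)) * X * (W^(m+2))⁻¹ := by
    rw [Finset.sum_range_succ]
    congr 1
    · apply Finset.sum_congr rfl
      intro j hj
      ring
    · simp only [Nat.succ_descFactorial_succ, Nat.descFactorial_self, Nat.sub_self, pow_zero]
      push_cast
      ring
  rw [hB, htar, hsplit, hre]
  ring

lemma st8_hasDerivAt_X (x : ℝ) (hx : 0 < x) (s : ℂ) :
    HasDerivAt (fun s : ℂ => (x:ℂ)^(1-s)) (-(Real.log x : ℂ) * (x:ℂ)^(1-s)) s := by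
  have h1 : HasDerivAt (fun s : ℂ => 1-s) (-1 : ℂ) s := by
    simpa using (hasDerivAt_id s).const_sub 1
  have hx0 : ((x:ℝ):ℂ) ≠ 0 := by exact_mod_cast hx.ne'
  have := h1.const_cpow (c := (x:ℂ)) (Or.inl hx0)
  convert this using 1
  rw [← Complex.ofReal_log hx.le]
  ring

lemma st8_hasDerivAt_Z (i : ℕ) {s : ℂ} (hs : (1:ℂ) - s ≠ 0) :
    HasDerivAt (fun s : ℂ => ((1-s)^(i+1))⁻¹) (((i:ℂ)+1) * ((1-s)^(i+2))⁻¹) s := by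
  have h1 : HasDerivAt (fun s : ℂ => 1-s) (-1 : ℂ) s := by
    simpa using (hasDerivAt_id s).const_sub 1
  have hpow := hasDerivAt_pow (i+1) ((1:ℂ)-s)
  have hcomp := HasDerivAt.comp s hpow h1
  have hinv := hcomp.inv (pow_ne_zero _ hs)
  refine hinv.congr_deriv ?_
  have h2 : ((1:ℂ)-s)^(i+1-1) = ((1:ℂ)-s)^i := by norm_num
  simp only [Function.comp_apply]
  rw [h2]
  field_simp
  push_cast
  ring

lemma st8F_hasDerivAt {r q : ℕ} (x : ℝ) (hx : 0 < x) (m : ℕ) {s : ℂ} (hs : s ≠ 1) :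
    HasDerivAt (fun s => st8F r q x m s) (st8F r q x (m+1) s) s := by
  have h1s : (1:ℂ) - s ≠ 0 := sub_ne_zero.mpr (Ne.symm hs)
  -- first part
  have hP1 : HasDerivAt
      (fun s : ℂ => ∑ n ∈ Finset.Icc 1 ⌊x⌋₊,
        if n % q = r % q then (-(Real.log n : ℂ))^m * (n:ℂ)^(-s) else 0)
      (∑ n ∈ Finset.Icc 1 ⌊x⌋₊,
        if n % q = r % q then (-(Real.log n : ℂ))^(m+1) * (n:ℂ)^(-s) else 0) s := by
    apply HasDerivAt.fun_sum
    intro n hn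
    simp only [Finset.mem_Icc] at hn
    have hn0 : ((n:ℕ):ℂ) ≠ 0 := by exact_mod_cast (by omega : n ≠ 0)
    by_cases h : n % q = r % q
    · simp only [if_pos h]
      have hneg : HasDerivAt (fun s : ℂ => -s) (-1 : ℂ) s := (hasDerivAt_id s).neg
      have hcp := hneg.const_cpow (c := (n:ℂ)) (Or.inl hn0)
      have := hcp.const_mul ((-(Real.log n : ℂ))^m)
      refine this.congr_deriv ?_
      have hlog : Complex.log ((n:ℕ):ℂ) = ((Real.log n : ℝ):ℂ) := by
        rw [show ((n:ℕ):ℂ) = (((n:ℝ)):ℂ) by norm_cast,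
          ← Complex.ofReal_log (by positivity : (0:ℝ) ≤ (n:ℝ))]
      rw [hlog, pow_succ]
      ring
    · simp only [if_neg h]
      exact hasDerivAt_const s 0
  -- second part
  have hX := st8_hasDerivAt_X x hx s
  have hP2 : HasDerivAt
      (fun s : ℂ => ∑ i ∈ Finset.range (m+1), (m.descFactorial i : ℂ) * (-(Real.log x : ℂ))^(m-i)
        * (x:ℂ)^(1-s) * ((1-s)^(i+1))⁻¹)
      (∑ i ∈ Finset.range (m+2), ((m+1).descFactorial i : ℂ) * (-(Real.log x : ℂ))^(m+1-i)
        * (x:ℂ)^(1-s) * ((1-s)^(i+1))⁻¹) s := by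
    have hraw : HasDerivAt
        (fun s : ℂ => ∑ i ∈ Finset.range (m+1), (m.descFactorial i : ℂ) * (-(Real.log x : ℂ))^(m-i)
          * (x:ℂ)^(1-s) * ((1-s)^(i+1))⁻¹)
        (∑ i ∈ Finset.range (m+1),
          ((0 * ((x:ℂ)^(1-s)) + (m.descFactorial i : ℂ) * (-(Real.log x : ℂ))^(m-i)
              * (-(Real.log x : ℂ) * (x:ℂ)^(1-s))) * (((1-s)^(i+1))⁻¹)
            + ((m.descFactorial i : ℂ) * (-(Real.log x : ℂ))^(m-i) * ((x:ℂ)^(1-s)))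
              * (((i:ℂ)+1) * (((1-s)^(i+2))⁻¹)))) s := by
      apply HasDerivAt.fun_sum
      intro i hi
      exact ((hasDerivAt_const s ((m.descFactorial i : ℂ) * (-(Real.log x : ℂ))^(m-i))).mul hX).mul
        (st8_hasDerivAt_Z i h1s)
    rwa [st8_comb m (Real.log x : ℂ) ((x:ℂ)^(1-s)) ((1:ℂ)-s) h1s] at hraw
  have := hP1.sub (hP2.div_const (q:ℂ))
  exact this

-- derivative of t ↦ (t:ℂ)^(-s), real t
lemma st8_hasDerivAt_f {t : ℝ} (ht : 0 < t) {s : ℂ} (hs : s ≠ 0) :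
    HasDerivAt (fun y : ℝ => ((y:ℝ):ℂ)^(-s)) (-s * ((t:ℝ):ℂ)^(-s-1)) t := by
  have hne : -s - 1 ≠ -1 := by
    intro hcon
    apply hs
    have : -s = 0 := by linear_combination hcon
    linear_combination -this
  have h := (hasDerivAt_ofReal_cpow_const' ht.ne' hne).const_mul (-s)
  have heq : (fun y : ℝ => -s * (((y:ℝ):ℂ)^(-s-1+1) / (-s-1+1))) = fun y : ℝ => ((y:ℝ):ℂ)^(-s) := by
    funext y
    have h2 : -s-1+1 = -s := by ring
    rw [h2]
    field_simp
  rw [heq] at h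
  have h3 : -s-1+1 = -s := by ring
  convert h using 2

lemma st8_cpow_norm {t : ℝ} (ht : 0 < t) (w : ℂ) :
    ‖((t:ℝ):ℂ)^w‖ = t ^ w.re := by
  rw [Complex.norm_cpow_eq_rpow_re_of_pos ht]

lemma st8_hasDerivAt_phi1 {t : ℝ} (ht : 0 < t) {s : ℂ} (hs : s ≠ 1) :
    HasDerivAt (fun y : ℝ => ((y:ℝ):ℂ)^(1-s)/(1-s)) (((t:ℝ):ℂ)^(-s)) t := by
  have hne : -s ≠ -1 := fun hcon => hs (by linear_combination -hcon)
  have h := hasDerivAt_ofReal_cpow_const' ht.ne' hne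
  have heq : (fun y : ℝ => ((y:ℝ):ℂ)^(-s+1)/(-s+1)) = fun y : ℝ => ((y:ℝ):ℂ)^(1-s)/(1-s) := by
    funext y
    rw [show -s+1 = 1-s by ring]
  rwa [heq] at h

lemma st8u_bound {r q : ℕ} (hr : 0 < r) (hrq : r ≤ q) {k : ℕ} (hk : 1 ≤ k) {s : ℂ}
    (hs1 : s ≠ 1) {σ₀ M : ℝ} (hσ0 : 0 < σ₀) (hσ : σ₀ ≤ s.re) (hM : ‖s‖ ≤ M) :
    ‖st8u r q k s‖ ≤ M * q * (k:ℝ)^(-σ₀-1) := by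
  have hq : 0 < q := lt_of_lt_of_le hr hrq
  have hs0 : s ≠ 0 := by
    intro hcon
    rw [hcon] at hσ
    simp at hσ
    linarith
  set A : ℝ := ((q*k : ℕ):ℝ) with hA
  set B : ℝ := ((q*(k+1) : ℕ):ℝ) with hB
  set C : ℝ := ((q*k + r : ℕ):ℝ) with hC
  have hA1 : 1 ≤ A := by
    rw [hA]; exact_mod_cast Nat.one_le_iff_ne_zero.mpr (by positivity)
  have hAB : A + q = B := by rw [hA, hB]; push_cast; ring
  have hAC : A ≤ C := by rw [hA, hC]; push_cast; linarith [show (0:ℝ) ≤ (r:ℝ) from by positivity]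
  have hqR : (0:ℝ) < q := by exact_mod_cast hq
  have hrR : (r:ℝ) ≤ q := by exact_mod_cast hrq
  have hCB : C ≤ B := by rw [hC, hB]; push_cast; linarith
  have hA0 : (0:ℝ) < A := lt_of_lt_of_le one_pos hA1
  have hALB : A ≤ B := by linarith
  set I : Set ℝ := Set.Icc A B with hI
  have hconv : Convex ℝ I := convex_Icc A B
  have hAI : A ∈ I := Set.mem_Icc.mpr ⟨le_refl _, hALB⟩
  have hBI : B ∈ I := Set.mem_Icc.mpr ⟨hALB, le_refl _⟩
  have hCI : C ∈ I := Set.mem_Icc.mpr ⟨hAC, hCB⟩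
  have hM0 : (0:ℝ) ≤ M := le_trans (norm_nonneg s) hM
  set C1 : ℝ := M * A^(-σ₀-1) with hC1
  have hC10 : 0 ≤ C1 := by rw [hC1]; positivity
  have hfderiv : ∀ t ∈ I, HasDerivWithinAt (fun y : ℝ => ((y:ℝ):ℂ)^(-s))
      (-s * ((t:ℝ):ℂ)^(-s-1)) I t := fun t ht =>
    (st8_hasDerivAt_f (lt_of_lt_of_le hA0 ht.1) hs0).hasDerivWithinAt
  have hfbound : ∀ t ∈ I, ‖-s * ((t:ℝ):ℂ)^(-s-1)‖ ≤ C1 := by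
    intro t ht
    have ht0 : (0:ℝ) < t := lt_of_lt_of_le hA0 ht.1
    rw [norm_mul, norm_neg, st8_cpow_norm ht0]
    have hexp : (-s-1).re ≤ 0 := by
      simp only [Complex.sub_re, Complex.neg_re, Complex.one_re]
      linarith
    have h1 : t ^ ((-s-1).re) ≤ A ^ ((-s-1).re) :=
      antitoneOn_rpow_Ioi_of_exponent_nonpos hexp (Set.mem_Ioi.mpr hA0)
        (Set.mem_Ioi.mpr ht0) ht.1
    have h2 : A ^ ((-s-1).re) ≤ A ^ (-σ₀-1) := by
      apply Real.rpow_le_rpow_of_exponent_le hA1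
      simp only [Complex.sub_re, Complex.neg_re, Complex.one_re]
      linarith
    rw [hC1]
    exact mul_le_mul hM (h1.trans h2) (Real.rpow_nonneg ht0.le _) hM0
  have hfC : ∀ t ∈ I, ‖((t:ℝ):ℂ)^(-s) - ((C:ℝ):ℂ)^(-s)‖ ≤ C1 * q := by
    intro t ht
    have := hconv.norm_image_sub_le_of_norm_hasDerivWithin_le hfderiv hfbound hCI ht
    refine le_trans this ?_
    have habs : ‖t - C‖ ≤ (q:ℝ) := by
      rw [Real.norm_eq_abs, abs_le]
      rcases Set.mem_Icc.mp ht with ⟨h1, h2⟩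
      constructor <;> linarith
    exact mul_le_mul_of_nonneg_left habs hC10
  set φ : ℝ → ℂ := fun t => ((t:ℝ):ℂ)^(1-s)/(1-s) - ((t:ℝ):ℂ) * ((C:ℝ):ℂ)^(-s) with hφ
  have hφderiv : ∀ t ∈ I, HasDerivWithinAt φ (((t:ℝ):ℂ)^(-s) - ((C:ℝ):ℂ)^(-s)) I t := by
    intro t ht
    have h1 := st8_hasDerivAt_phi1 (lt_of_lt_of_le hA0 ht.1) hs1
    have h2 : HasDerivAt (fun y : ℝ => ((y:ℝ):ℂ) * ((C:ℝ):ℂ)^(-s)) (((C:ℝ):ℂ)^(-s)) t := by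
      have h3 := (Complex.ofRealCLM.hasDerivAt (x := t)).mul_const (((C:ℝ):ℂ)^(-s))
      simpa using h3
    exact (h1.sub h2).hasDerivWithinAt
  have hMVT := hconv.norm_image_sub_le_of_norm_hasDerivWithin_le hφderiv hfC hAI hBI
  have hBA : ‖B - A‖ = (q:ℝ) := by
    rw [Real.norm_eq_abs, abs_of_nonneg (by linarith)]
    linarith
  rw [hBA] at hMVT
  have h1s : (1:ℂ) - s ≠ 0 := sub_ne_zero.mpr (Ne.symm hs1)
  have hqC : ((q:ℕ):ℂ) ≠ 0 := by exact_mod_cast hq.ne'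
  have hid : st8u r q k s = -(φ B - φ A)/q := by
    rw [hφ]
    unfold st8u
    rw [hA, hB, hC]
    push_cast
    field_simp
    ring
  rw [hid]
  rw [norm_div, norm_neg]
  have hnq : ‖((q:ℕ):ℂ)‖ = (q:ℝ) := by
    rw [Complex.norm_natCast]
  rw [hnq]
  rw [div_le_iff₀ hqR]
  calc ‖φ B - φ A‖ ≤ C1 * (q:ℝ) * (q:ℝ) := hMVT
    _ ≤ M * (q:ℝ) * (k:ℝ)^(-σ₀-1) * (q:ℝ) := by
        have hk0 : (0:ℝ) < k := by exact_mod_cast hk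
        have hkA : (k:ℝ) ≤ A := by
          rw [hA]; exact_mod_cast Nat.le_mul_of_pos_left k hq
        have h3 : A^(-σ₀-1) ≤ (k:ℝ)^(-σ₀-1) :=
          antitoneOn_rpow_Ioi_of_exponent_nonpos (by linarith) (Set.mem_Ioi.mpr hk0)
            (Set.mem_Ioi.mpr hA0) hkA
        rw [hC1]
        have := mul_le_mul_of_nonneg_right (mul_le_mul_of_nonneg_left h3 hM0) (le_of_lt hqR)
        calc M * A^(-σ₀-1) * (q:ℝ) * (q:ℝ) ≤ M * (k:ℝ)^(-σ₀-1) * (q:ℝ) * (q:ℝ) := by nlinarith [Real.rpow_nonneg hk0.le (-σ₀-1)]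
          _ = M * (q:ℝ) * (k:ℝ)^(-σ₀-1) * (q:ℝ) := by ring


lemma st8D_bound {r q : ℕ} (hr : 0 < r) (hrq : r ≤ q) {x : ℝ} (hx : (q:ℝ)+1 ≤ x)
    {s : ℂ} (hs1 : s ≠ 1) {σ₀ : ℝ} (hσ0 : 0 < σ₀) (hσ : σ₀ ≤ s.re) :
    ‖(((q * st8K r q x : ℕ):ℂ)^(1-s) - (x:ℂ)^(1-s))/((1-s)*(q:ℂ))‖ ≤ (x - q)^(-σ₀) := by
  have hq : 0 < q := lt_of_lt_of_le hr hrq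
  have hqR : (0:ℝ) < q := by exact_mod_cast hq
  have hx0 : (0:ℝ) < x := by linarith
  have hs0 : s ≠ 0 := by
    intro hcon; rw [hcon] at hσ; simp at hσ; linarith
  set N : ℕ := ⌊x⌋₊ with hN
  set t : ℕ := q * st8K r q x with ht
  have hdm := Nat.div_add_mod (N + q - r) q
  have hmod : (N + q - r) % q < q := Nat.mod_lt _ hq
  have htle : t ≤ N + q - r ∧ t + r ≥ N + 1 := by
    constructor <;> [skip; skip] <;>
    · rw [ht]; unfold st8K; rw [← hN]; omega
  have hNx : (N:ℝ) ≤ x := Nat.floor_le hx0.le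
  have hxN : x < (N:ℝ) + 1 := Nat.lt_floor_add_one x
  have hwx : |(t:ℝ) - x| ≤ q := by
    have h1 : (t:ℝ) ≤ (N:ℝ) + q - r := by
      have : (t:ℝ) ≤ ((N + q - r : ℕ):ℝ) := by exact_mod_cast htle.1
      have h2 : ((N + q - r : ℕ):ℝ) = (N:ℝ) + q - r := by
        have : r ≤ N + q := by omega
        push_cast [this]
        ring
      linarith
    have h2 : (t:ℝ) + r ≥ (N:ℝ) + 1 := by exact_mod_cast htle.2
    have hrR : (1:ℝ) ≤ r := by exact_mod_cast hr
    have hrqR : (r:ℝ) ≤ q := by exact_mod_cast hrq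
    rw [abs_le]
    constructor <;> linarith
  set J : Set ℝ := Set.Icc (x - q) (x + q) with hJ
  have hxq1 : (1:ℝ) ≤ x - q := by linarith
  have hwJ : (t:ℝ) ∈ J := by
    rw [hJ]; rw [abs_le] at hwx
    exact Set.mem_Icc.mpr ⟨by linarith [hwx.1], by linarith [hwx.2]⟩
  have hxJ : x ∈ J := Set.mem_Icc.mpr ⟨by linarith, by linarith⟩
  have hderiv : ∀ u ∈ J, HasDerivWithinAt (fun y : ℝ => ((y:ℝ):ℂ)^(1-s)/(1-s))
      (((u:ℝ):ℂ)^(-s)) J u := fun u hu =>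
    (st8_hasDerivAt_phi1 (by rcases Set.mem_Icc.mp hu with ⟨h1, _⟩; linarith) hs1).hasDerivWithinAt
  have hbound : ∀ u ∈ J, ‖((u:ℝ):ℂ)^(-s)‖ ≤ (x - q)^(-σ₀) := by
    intro u hu
    rcases Set.mem_Icc.mp hu with ⟨h1, h2⟩
    have hu0 : (0:ℝ) < u := by linarith
    rw [st8_cpow_norm hu0]
    have hexp : (-s).re ≤ 0 := by
      simp only [Complex.neg_re]; linarith
    have hA : u ^ ((-s).re) ≤ (x - q) ^ ((-s).re) :=
      antitoneOn_rpow_Ioi_of_exponent_nonpos hexp (Set.mem_Ioi.mpr (by linarith))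
        (Set.mem_Ioi.mpr hu0) h1
    have hB : (x - q) ^ ((-s).re) ≤ (x - q) ^ (-σ₀) := by
      apply Real.rpow_le_rpow_of_exponent_le hxq1
      simp only [Complex.neg_re]; linarith
    exact hA.trans hB
  have hMVT := (convex_Icc (x-q) (x+q)).norm_image_sub_le_of_norm_hasDerivWithin_le
    hderiv hbound hxJ hwJ
  have h1s : (1:ℂ) - s ≠ 0 := sub_ne_zero.mpr (Ne.symm hs1)
  have hqC : ((q:ℕ):ℂ) ≠ 0 := by exact_mod_cast hq.ne'
  have hid : (((t:ℕ):ℂ)^(1-s) - (x:ℂ)^(1-s))/((1-s)*(q:ℂ))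
      = (((t:ℝ):ℂ)^(1-s)/(1-s) - ((x:ℝ):ℂ)^(1-s)/(1-s))/(q:ℂ) := by
    push_cast
    field_simp
  rw [hid, norm_div, Complex.norm_natCast]
  rw [div_le_iff₀ hqR]
  calc ‖((t:ℝ):ℂ)^(1-s)/(1-s) - ((x:ℝ):ℂ)^(1-s)/(1-s)‖
      ≤ (x - q)^(-σ₀) * ‖(t:ℝ) - x‖ := hMVT
    _ ≤ (x - q)^(-σ₀) * q := by
        apply mul_le_mul_of_nonneg_left _ (Real.rpow_nonneg (by linarith) _)
        rw [Real.norm_eq_abs]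
        exact hwx
    _ = (x - q)^(-σ₀) * q := rfl

lemma st8K_tendsto {r q : ℕ} (hr : 0 < r) (hrq : r ≤ q) :
    Tendsto (fun x : ℝ => st8K r q x) atTop atTop := by
  have hq : 0 < q := lt_of_lt_of_le hr hrq
  rw [tendsto_atTop]
  intro b
  filter_upwards [eventually_ge_atTop ((q*b + q : ℕ):ℝ)] with x hx
  rcases Nat.eq_zero_or_pos b with rfl | hb
  · exact Nat.zero_le _
  have hfl : q*b + q ≤ ⌊x⌋₊ := Nat.le_floor hx
  have h1 : b - 1 < st8K r q x := by
    unfold st8K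
    rw [st8K_iff hr hrq]
    have h2 : q*(b-1) + q ≤ q * b := by
      rw [← Nat.mul_succ]
      exact Nat.mul_le_mul_left q (by omega)
    omega
  omega

lemma st8_TLU {r q : ℕ} (hr : 0 < r) (hrq : r ≤ q) :
    TendstoLocallyUniformlyOn (fun (x:ℝ) s => st8G r q x s)
      (fun s => ∑' k, st8u r q k s) atTop st8Omega := by
  have hq : 0 < q := lt_of_lt_of_le hr hrq
  have hqR : (0:ℝ) < q := by exact_mod_cast hq
  rw [tendstoLocallyUniformlyOn_iff_forall_isCompact st8Omega_open]
  intro K hKΩ hK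
  rcases K.eq_empty_or_nonempty with rfl | hne
  · exact tendstoUniformlyOn_empty
  -- get σ₀ and M
  obtain ⟨z0, hz0K, hz0min⟩ := hK.exists_isMinOn hne Complex.continuous_re.continuousOn
  set σ₀ : ℝ := z0.re with hσ₀
  have hσ₀pos : 0 < σ₀ := (hKΩ hz0K).1
  have hσ₀le : ∀ s ∈ K, σ₀ ≤ s.re := fun s hs => hz0min hs
  obtain ⟨M, hM⟩ := hK.exists_bound_of_continuousOn continuousOn_id
  -- bound for u 0 on K
  have hrC : ((r:ℕ):ℂ) ≠ 0 := by exact_mod_cast hr.ne'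
  have hqC : ((q:ℕ):ℂ) ≠ 0 := by exact_mod_cast hq.ne'
  have hu0cont : ContinuousOn (st8u r q 0) K := by
    have hcont : ContinuousOn
        (fun s : ℂ => ((r:ℕ):ℂ)^(-s) - (((q:ℕ):ℂ)^(1-s) - 0)/((1-s)*(q:ℂ))) K := by
      apply ContinuousOn.sub
      · exact (continuous_neg.const_cpow (Or.inl hrC)).continuousOn
      · apply ContinuousOn.div
        · exact (((continuous_const.sub continuous_id).const_cpow
            (Or.inl hqC)).sub continuous_const).continuousOn
        · exact ((continuous_const.sub continuous_id).mul continuous_const).continuousOn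
        · intro s hs
          exact mul_ne_zero (sub_ne_zero.mpr (Ne.symm (hKΩ hs).2)) hqC
    apply hcont.congr
    intro s hs
    unfold st8u
    have h00 : ((q*0 : ℕ):ℂ) = 0 := by norm_num
    rw [h00, Complex.zero_cpow (sub_ne_zero.mpr (Ne.symm (hKΩ hs).2))]
    norm_num
  obtain ⟨C₀, hC₀⟩ := hK.exists_bound_of_continuousOn hu0cont
  -- M-test
  set b : ℕ → ℝ := fun k => if k = 0 then C₀ else M*q*(k:ℝ)^(-σ₀-1) with hb
  have hbsum : Summable b := by
    have h1 : Summable (fun k:ℕ => M*q*((k:ℝ))^(-σ₀-1)) :=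
      (Real.summable_nat_rpow.mpr (by linarith)).mul_left (M*q)
    apply (summable_nat_add_iff 1).mp
    apply Summable.congr ((summable_nat_add_iff 1).mpr h1)
    intro n
    simp [hb]
  have hble : ∀ k, ∀ s ∈ K, ‖st8u r q k s‖ ≤ b k := by
    intro k s hs
    rcases Nat.eq_zero_or_pos k with rfl | hk
    · simpa [hb] using hC₀ s hs
    · have := st8u_bound hr hrq hk (hKΩ hs).2 hσ₀pos (hσ₀le s hs)
        (show ‖s‖ ≤ M by exact hM s hs)
      simpa [hb, Nat.pos_iff_ne_zero.mp hk] using this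
  have hMtest := tendstoUniformlyOn_tsum_nat hbsum hble
  -- compose with st8K → ∞
  have hpart : TendstoUniformlyOn (fun (x:ℝ) s => ∑ k ∈ Finset.range (st8K r q x), st8u r q k s)
      (fun s => ∑' k, st8u r q k s) atTop K := by
    rw [Metric.tendstoUniformlyOn_iff] at hMtest ⊢
    intro ε hε
    exact (st8K_tendsto hr hrq).eventually (hMtest ε hε)
  -- D term
  have hD : TendstoUniformlyOn
      (fun (x:ℝ) s => ((((q * st8K r q x : ℕ)):ℂ)^(1-s) - (x:ℂ)^(1-s))/((1-s)*(q:ℂ)))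
      (fun _ => 0) atTop K := by
    rw [Metric.tendstoUniformlyOn_iff]
    intro ε hε
    have hto : Tendsto (fun x : ℝ => (x - q)^(-σ₀)) atTop (nhds 0) :=
      (tendsto_rpow_neg_atTop hσ₀pos).comp (tendsto_atTop_add_const_right _ (-(q:ℝ)) tendsto_id)
    have hsmall : ∀ᶠ x : ℝ in atTop, (x - q)^(-σ₀) < ε := by
      filter_upwards [hto.eventually (gt_mem_nhds hε), eventually_ge_atTop ((q:ℝ)+1)] with x h1 _
      exact h1
    filter_upwards [hsmall, eventually_ge_atTop ((q:ℝ)+1)] with x h1 h2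
    intro s hs
    rw [dist_eq_norm, zero_sub, norm_neg]
    exact lt_of_le_of_lt (st8D_bound hr hrq h2 (hKΩ hs).2 hσ₀pos (hσ₀le s hs)) h1
  have hsum := hpart.add hD
  have h1 : ((fun s => ∑' (k : ℕ), st8u r q k s) + fun _ => 0)
      = fun s => ∑' (k : ℕ), st8u r q k s := by
    funext s; simp
  rw [h1] at hsum
  apply hsum.congr
  filter_upwards with x
  intro s hs
  simp only [Pi.add_apply]
  exact (st8_decomp hr hrq x (hKΩ hs).2).symm

lemma st8F_zero (r q : ℕ) (x : ℝ) : (fun s => st8F r q x 0 s) = st8G r q x := by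
  funext s
  unfold st8F st8G st8S
  norm_num [← div_eq_mul_inv, div_div]

lemma st8_mem_Omega_of_re {s : ℂ} (hs : 1 < s.re) : s ∈ st8Omega := by
  refine ⟨by linarith, ?_⟩
  intro h
  rw [h] at hs
  simp at hs

lemma st8_L_eq {r q : ℕ} (hr : 0 < r) (hrq : r ≤ q) {s : ℂ} (hs : 1 < s.re) :
    (∑' k, st8u r q k s) = partialZeta r q s := by
  have hq : 0 < q := lt_of_lt_of_le hr hrq
  have hqR : (0:ℝ) < q := by exact_mod_cast hq
  have hsΩ : s ∈ st8Omega := st8_mem_Omega_of_re hs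
  have h1 : Tendsto (fun x : ℝ => st8G r q x s) atTop (nhds (∑' k, st8u r q k s)) :=
    (st8_TLU hr hrq).tendsto_at hsΩ
  -- HasSum of the v's
  have ha : (r:ℝ)/q ∈ Set.Icc (0:ℝ) 1 := by
    constructor
    · positivity
    · rw [div_le_one hqR]; exact_mod_cast hrq
  have hz := hasSum_hurwitzZeta_of_one_lt_re ha hs
  have hv : HasSum (fun k : ℕ => ((q*k + r : ℕ):ℂ)^(-s)) (partialZeta r q s) := by
    have h2 := hz.mul_left ((q:ℂ)^(-s))
    have hterm : ∀ k : ℕ, (q:ℂ)^(-s) * (1/(((k:ℂ)) + (((r:ℝ)/q : ℝ)):ℂ)^s)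
        = ((q*k + r : ℕ):ℂ)^(-s) := by
      intro k
      have hb0 : (0:ℝ) ≤ (k:ℝ) + (r:ℝ)/q := by positivity
      have hkey : ((q*k + r : ℕ):ℝ) = q * ((k:ℝ) + (r:ℝ)/q) := by
        field_simp
        push_cast
        ring
      have hsplit : ((((q:ℝ)):ℂ) * ((((k:ℝ) + (r:ℝ)/q : ℝ)):ℂ))^(-s)
          = (((q:ℝ)):ℂ)^(-s) * ((((k:ℝ) + (r:ℝ)/q : ℝ)):ℂ)^(-s) :=
        Complex.mul_cpow_ofReal_nonneg hqR.le hb0 (-s)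
      calc (q:ℂ)^(-s) * (1/(((k:ℂ)) + (((r:ℝ)/q : ℝ)):ℂ)^s)
          = (((q:ℝ)):ℂ)^(-s) * ((((k:ℝ) + (r:ℝ)/q : ℝ)):ℂ)^(-s) := by
            push_cast
            simp [Complex.cpow_neg]
        _ = ((((q:ℝ)):ℂ) * ((((k:ℝ) + (r:ℝ)/q : ℝ)):ℂ))^(-s) := hsplit.symm
        _ = ((q*k + r : ℕ):ℂ)^(-s) := by
            rw [show (((q:ℝ)):ℂ) * ((((k:ℝ) + (r:ℝ)/q : ℝ)):ℂ) = ((((q*k + r : ℕ):ℝ)):ℂ) by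
              rw [hkey]; push_cast; ring]
            norm_cast
    rw [show (fun k : ℕ => (q:ℂ)^(-s) * (1/(((k:ℂ)) + (((r:ℝ)/q : ℝ)):ℂ)^s))
      = fun k : ℕ => ((q*k + r : ℕ):ℂ)^(-s) from funext hterm] at h2
    exact h2
  have h3 := (hv.tendsto_sum_nat).comp (st8K_tendsto hr hrq)
  have h4 : Tendsto (fun x : ℝ => (x:ℂ)^(1-s)/((1-s)*(q:ℂ))) atTop (nhds 0) := by
    have hbnd : ∀ᶠ x : ℝ in atTop, ‖(x:ℂ)^(1-s)/((1-s)*(q:ℂ))‖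
        ≤ (fun x : ℝ => x^(1-s.re) * ‖((1:ℂ)-s)*(q:ℂ)‖⁻¹) x := by
      filter_upwards [eventually_ge_atTop (1:ℝ)] with x hx
      rw [norm_div,
        Complex.norm_cpow_eq_rpow_re_of_pos (by linarith) (1-s)]
      rw [div_eq_mul_inv]
      apply mul_le_mul_of_nonneg_right _ (by positivity)
      apply le_of_eq
      congr 1
    have hg : Tendsto (fun x : ℝ => x^(1-s.re) * ‖((1:ℂ)-s)*(q:ℂ)‖⁻¹) atTop (nhds 0) := by
      have hbase : Tendsto (fun x : ℝ => x^(1-s.re)) atTop (nhds 0) := by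
        have h6 := tendsto_rpow_neg_atTop (show (0:ℝ) < s.re - 1 by linarith)
        convert h6 using 2 with x
        ring_nf
      simpa using hbase.mul_const ‖((1:ℂ)-s)*(q:ℂ)‖⁻¹
    exact squeeze_zero_norm' hbnd hg
  have h5 : Tendsto (fun x : ℝ => st8G r q x s) atTop (nhds (partialZeta r q s - 0)) := by
    apply Tendsto.congr _ (h3.sub h4)
    intro x
    show (∑ k ∈ Finset.range (st8K r q x), ((q*k + r : ℕ):ℂ)^(-s))
      - (x:ℂ)^(1-s)/((1-s)*(q:ℂ)) = st8G r q x s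
    unfold st8G st8S st8K
    rw [st8_reindex hr hrq]
  rw [sub_zero] at h5
  exact tendsto_nhds_unique h1 h5

lemma st8F_zero' (r q : ℕ) (x : ℝ) : st8F r q x 0 = st8G r q x := st8F_zero r q x

lemma st8_hdG {r q : ℕ} :
    ∀ᶠ x in (atTop : Filter ℝ), DifferentiableOn ℂ (fun s => st8G r q x s) st8Omega := by
  filter_upwards [eventually_gt_atTop (0:ℝ)] with x hx
  have hdiff : DifferentiableOn ℂ (st8F r q x 0) st8Omega := fun s hs =>
    (st8F_hasDerivAt (r := r) (q := q) x hx 0 hs.2).differentiableAt.differentiableWithinAt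
  rwa [st8F_zero'] at hdiff

lemma st8_eqOn {r q : ℕ} (hr : 0 < r) (hrq : r ≤ q) :
    Set.EqOn (fun s => ∑' k, st8u r q k s) (partialZeta r q) st8Omega := by
  have hq : 0 < q := lt_of_lt_of_le hr hrq
  have hqC : ((q:ℕ):ℂ) ≠ 0 := by exact_mod_cast hq.ne'
  have hL : DifferentiableOn ℂ (fun s => ∑' k, st8u r q k s) st8Omega :=
    (st8_TLU hr hrq).differentiableOn st8_hdG st8Omega_open
  have hF : DifferentiableOn ℂ (partialZeta r q) st8Omega := by
    intro s hs
    apply DifferentiableAt.differentiableWithinAt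
    apply DifferentiableAt.mul
    · exact differentiableAt_id.neg.const_cpow (Or.inl hqC)
    · exact differentiableAt_hurwitzZeta _ hs.2
  have h2mem : (2:ℂ) ∈ st8Omega := by
    constructor
    · norm_num
    · intro h
      have := congrArg Complex.re h
      norm_num at this
  apply (hL.analyticOnNhd st8Omega_open).eqOn_of_preconnected_of_eventuallyEq
    (hF.analyticOnNhd st8Omega_open) st8_preconnected h2mem
  apply Filter.eventually_of_mem
    ((isOpen_lt continuous_const Complex.continuous_re).mem_nhds
      (show (1:ℝ) < (2:ℂ).re by norm_num))
  intro s hs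
  exact st8_L_eq hr hrq hs

lemma st8_Z_eq {r q : ℕ} (hr : 0 < r) (hrq : r ≤ q) {α : ℝ} (hα0 : 0 < α) (hα1 : α < 1)
    (m : ℕ) (Z : ℝ)
    (hZl : Tendsto (fun x : ℝ => Hk m α r q x - Ik m x α / q) atTop (nhds Z)) :
    iteratedDeriv m (partialZeta r q) (α:ℂ) = (-1:ℂ)^m * (Z:ℂ) := by
  have hα1' : (α:ℂ) ≠ 1 := by
    intro h
    have := congrArg Complex.re h
    simp at this
    linarith
  have hαΩ : (α:ℂ) ∈ st8Omega := by
    constructor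
    · simpa using hα0
    · exact hα1'
  have hTLUm := (st8_TLU_iteratedDeriv st8Omega_open (st8_TLU hr hrq) st8_hdG m).1
  have h1 : Tendsto (fun x : ℝ => iteratedDeriv m (fun s => st8G r q x s) (α:ℂ)) atTop
      (nhds (iteratedDeriv m (fun s => ∑' k, st8u r q k s) (α:ℂ))) := hTLUm.tendsto_at hαΩ
  have h2 : ∀ᶠ x : ℝ in atTop, iteratedDeriv m (fun s => st8G r q x s) (α:ℂ)
      = (-1:ℂ)^m * ((Hk m α r q x - Ik m x α / q : ℝ):ℂ) := by
    filter_upwards [eventually_gt_atTop (0:ℝ)] with x hx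
    have hchain := st8_iteratedDeriv_chain (U := {s : ℂ | s ≠ 1}) isOpen_ne
      (st8F r q x) (fun m s hs => st8F_hasDerivAt x hx m hs) m (α:ℂ) hα1'
    rw [st8F_zero'] at hchain
    have : iteratedDeriv m (fun s => st8G r q x s) (α:ℂ)
        = iteratedDeriv m (st8G r q x) (α:ℂ) := rfl
    rw [this, hchain, st8F_apply_real x hx hα0 hα1 m]
  have h4 : Tendsto (fun x : ℝ => ((Hk m α r q x - Ik m x α / q : ℝ):ℂ)) atTop
      (nhds ((Z:ℝ):ℂ)) := (Complex.continuous_ofReal.tendsto Z).comp hZl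
  have h3 : Tendsto (fun x : ℝ => iteratedDeriv m (fun s => st8G r q x s) (α:ℂ)) atTop
      (nhds ((-1:ℂ)^m * (Z:ℂ))) := by
    apply Filter.Tendsto.congr' (EventuallyEq.symm h2)
    exact h4.const_mul _
  have h5 := tendsto_nhds_unique h1 h3
  have heqn : (fun s => ∑' k, st8u r q k s) =ᶠ[nhds (α:ℂ)] partialZeta r q :=
    Filter.eventually_of_mem (st8Omega_open.mem_nhds hαΩ) (st8_eqOn hr hrq)
  rw [← heqn.iteratedDeriv_eq m, h5]


/-- Taylor expansion of `ζ(s; r, q)` at `s = α`: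
`ζ(s;r,q) = ∑_{m≥0} ((-1)^m / m!) ζ_m(α,r,q) (s-α)^m` for `|s-α| < |α-1|`. -/
theorem stmt8 (α : ℝ) (hα : α ∈ Set.Ioo (0 : ℝ) 1) (r q : ℕ)
    (hr : 0 < r) (hrq : r ≤ q)
    (Z : ℕ → ℝ)
    (hZ : ∀ m : ℕ,
      Tendsto (fun x : ℝ => Hk m α r q x - Ik m x α / q) atTop (nhds (Z m)))
    (s : ℂ) (hs : ‖s - (α : ℂ)‖ < |α - 1|) :
    HasSum (fun m : ℕ => ((-1 : ℂ) ^ m / (Nat.factorial m : ℂ)) * (Z m : ℂ) *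
      (s - (α : ℂ)) ^ m) (partialZeta r q s) := by
  obtain ⟨hα0, hα1⟩ := hα
  have hq : 0 < q := lt_of_lt_of_le hr hrq
  have hqC : ((q:ℕ):ℂ) ≠ 0 := by exact_mod_cast hq.ne'
  have hball : DifferentiableOn ℂ (partialZeta r q) (Metric.ball (α:ℂ) (1-α)) := by
    intro z hz
    apply DifferentiableAt.differentiableWithinAt
    apply DifferentiableAt.mul
    · exact differentiableAt_id.neg.const_cpow (Or.inl hqC)
    · apply differentiableAt_hurwitzZeta
      intro h1
      rw [h1, Metric.mem_ball, Complex.dist_eq] at hz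
      have habs1 : ‖(1:ℂ) - (α:ℂ)‖ = 1 - α := by
        rw [show (1:ℂ) - (α:ℂ) = ((1 - α : ℝ):ℂ) by push_cast; ring, Complex.norm_real, Real.norm_eq_abs,
          abs_of_pos (by linarith)]
      rw [habs1] at hz
      exact lt_irrefl _ hz
  have hmem : s ∈ Metric.ball (α:ℂ) (1-α) := by
    rw [Metric.mem_ball, Complex.dist_eq]
    have habs : |α - 1| = 1 - α := by
      rw [abs_of_neg (by linarith : α - 1 < 0)]; ring
    exact habs ▸ hs
  have hTay := Complex.hasSum_taylorSeries_on_ball hball hmem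
  have hco : ∀ m : ℕ, ((-1:ℂ)^m / (Nat.factorial m : ℂ)) * (Z m : ℂ) * (s - (α:ℂ))^m
      = ((Nat.factorial m : ℂ))⁻¹ • (s - (α:ℂ))^m • iteratedDeriv m (partialZeta r q) (α:ℂ) := by
    intro m
    rw [st8_Z_eq hr hrq hα0 hα1 m (Z m) (hZ m), smul_eq_mul, smul_eq_mul]
    ring
  rw [show (fun m : ℕ => ((-1:ℂ)^m / (Nat.factorial m : ℂ)) * (Z m : ℂ) * (s - (α:ℂ))^m)
      = fun m : ℕ => ((Nat.factorial m : ℂ))⁻¹ • (s - (α:ℂ))^m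
          • iteratedDeriv m (partialZeta r q) (α:ℂ) from funext fun m => hco m]
  exact hTay
end

section
/- For the principal Dirichlet character χ₀ modulo q, the limit lim_{x→∞} ( ∑_{n ≤ x, gcd(n, rad(q)) = 1} (log n)^k / n − ∏_{p | rad(q)} (1 − 1/p) · (log x)^{k+1}/(k+1) ) exists, and equals the k-th Laurent coefficient constant γ_k(χ₀) = ∑_{1 ≤ r ≤ q, gcd(r,q)=1} γ_k(r,q). -/
open Filter Real Finset

/-- The radical of `q`: the product of the distinct prime divisors of `q`. -/
def radical (q : ℕ) : ℕ := ∏ p ∈ q.primeFactors, p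

lemma coprime_radical_iff {q : ℕ} (hq : 0 < q) {n : ℕ} (hn : 0 < n) :
    Nat.gcd n (radical q) = 1 ↔ Nat.gcd n q = 1 := by
  have hrad : (radical q).primeFactors = q.primeFactors :=
    Nat.primeFactors_prod (fun p hp => Nat.prime_of_mem_primeFactors hp)
  have hradpos : radical q ≠ 0 := by
    unfold radical
    exact Finset.prod_ne_zero_iff.mpr fun p hp => (Nat.prime_of_mem_primeFactors hp).ne_zero
  rw [← Nat.coprime_iff_gcd_eq_one, ← Nat.coprime_iff_gcd_eq_one,
    ← Nat.disjoint_primeFactors hn.ne' hradpos, ← Nat.disjoint_primeFactors hn.ne' hq.ne', hrad]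

lemma card_filter_coprime (q : ℕ) (hq : 0 < q) :
    ((Finset.Icc 1 q).filter (fun r => Nat.gcd r q = 1)).card = q.totient := by
  rw [Nat.totient_eq_card_coprime]
  apply Finset.card_bij (fun r _ => r % q)
  · intro r hr
    simp only [Finset.mem_filter, Finset.mem_Icc] at hr
    simp only [Finset.mem_filter, Finset.mem_range]
    refine ⟨Nat.mod_lt _ hq, ?_⟩
    have : Nat.gcd (r % q) q = Nat.gcd r q := (Nat.gcd_rec q r).symm.trans (Nat.gcd_comm q r)
    unfold Nat.Coprime
    rw [Nat.gcd_comm, this, hr.2]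
  · intro a ha b hb hab
    simp only [Finset.mem_filter, Finset.mem_Icc] at ha hb
    rcases eq_or_lt_of_le ha.1.2 with hA | hA
    · rcases eq_or_lt_of_le hb.1.2 with hB | hB
      · omega
      · rw [hA, Nat.mod_self, Nat.mod_eq_of_lt hB] at hab; omega
    · rcases eq_or_lt_of_le hb.1.2 with hB | hB
      · rw [hB, Nat.mod_self, Nat.mod_eq_of_lt hA] at hab; omega
      · rwa [Nat.mod_eq_of_lt hA, Nat.mod_eq_of_lt hB] at hab
  · intro a ha
    simp only [Finset.mem_filter, Finset.mem_range] at ha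
    rcases Nat.eq_zero_or_pos a with rfl | hapos
    · have hq1 : q = 1 := by
        have := ha.2; unfold Nat.Coprime at this; simpa using this
      exact ⟨q, by simp [Finset.mem_filter, Finset.mem_Icc, hq, hq1], by simp [hq1]⟩
    · refine ⟨a, ?_, Nat.mod_eq_of_lt ha.1⟩
      simp only [Finset.mem_filter, Finset.mem_Icc]
      have := ha.2; unfold Nat.Coprime at this
      exact ⟨⟨hapos, ha.1.le⟩, by rwa [Nat.gcd_comm]⟩

lemma sum_residue_split (q : ℕ) (hq : 0 < q) (n : ℕ) (hn : 0 < n) (a : ℝ) :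
    ∑ r ∈ (Finset.Icc 1 q).filter (fun r => Nat.gcd r q = 1),
      (if n % q = r % q then a else 0) =
    (if Nat.gcd n (radical q) = 1 then a else 0) := by
  rw [show (if Nat.gcd n (radical q) = 1 then a else 0)
      = (if Nat.gcd n q = 1 then a else 0) by
    simp [coprime_radical_iff hq hn]]
  by_cases h : Nat.gcd n q = 1
  · rw [if_pos h]
    set r₀ : ℕ := if n % q = 0 then q else n % q with hr₀
    have hr₀mem : r₀ ∈ (Finset.Icc 1 q).filter (fun r => Nat.gcd r q = 1) := by
      have hkey : Nat.gcd (n % q) q = Nat.gcd n q := (Nat.gcd_rec q n).symm.trans (Nat.gcd_comm q n)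
      by_cases h0 : n % q = 0
      · have hq1 : q = 1 := by rw [h0] at hkey; simp at hkey; omega
        simp [hr₀, h0, hq1, Nat.mod_one]
      · simp only [Finset.mem_filter, Finset.mem_Icc, hr₀, if_neg h0]
        exact ⟨⟨Nat.one_le_iff_ne_zero.mpr h0, (Nat.mod_lt _ hq).le⟩, by rw [hkey, h]⟩
    have hr₀mod : n % q = r₀ % q := by
      by_cases h0 : n % q = 0
      · simp [hr₀, h0]
      · simp [hr₀, h0, Nat.mod_eq_of_lt (Nat.mod_lt n hq)]
    rw [Finset.sum_eq_single_of_mem r₀ hr₀mem]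
    · rw [if_pos hr₀mod]
    · intro r hr hne
      rw [if_neg]
      intro hcon
      apply hne
      simp only [Finset.mem_filter, Finset.mem_Icc] at hr hr₀mem
      have : r % q = r₀ % q := by omega
      rcases eq_or_lt_of_le hr.1.2 with hA | hA
      · rcases eq_or_lt_of_le hr₀mem.1.2 with hB | hB
        · omega
        · rw [hA, Nat.mod_self, Nat.mod_eq_of_lt hB] at this; omega
      · rcases eq_or_lt_of_le hr₀mem.1.2 with hB | hB
        · rw [hB, Nat.mod_self, Nat.mod_eq_of_lt hA] at this; omega
        · rwa [Nat.mod_eq_of_lt hA, Nat.mod_eq_of_lt hB] at this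
  · rw [if_neg h]
    apply Finset.sum_eq_zero
    intro r hr
    rw [if_neg]
    intro hcon
    simp only [Finset.mem_filter, Finset.mem_Icc] at hr
    apply h
    have hkey : Nat.gcd (n % q) q = Nat.gcd n q := (Nat.gcd_rec q n).symm.trans (Nat.gcd_comm q n)
    have hkey' : Nat.gcd (r % q) q = Nat.gcd r q := (Nat.gcd_rec q r).symm.trans (Nat.gcd_comm q r)
    rw [← hkey, hcon, hkey', hr.2]

/-- For the principal character mod `q`, the limit
`lim_{x→∞} (∑_{n ≤ x, (n, rad q) = 1} (log n)^k / n − ∏_{p | rad q}(1-1/p) · (log x)^{k+1}/(k+1))`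
exists and equals `γ_k(χ₀) = ∑_{1 ≤ r ≤ q, (r,q)=1} γ_k(r,q)`. -/
theorem stmt12 (q : ℕ) (hq : 0 < q) (k : ℕ)
    (G : ℕ → ℝ)
    (hG : ∀ r ∈ Finset.Icc 1 q, Nat.gcd r q = 1 →
      Tendsto (fun x : ℝ =>
          (∑ n ∈ Finset.Icc 1 ⌊x⌋₊, if n % q = r % q then Real.log n ^ k / (n : ℝ) else 0) -
            Real.log x ^ (k + 1) / (q * (k + 1)))
        atTop (nhds (G r))) :
    Tendsto (fun x : ℝ =>
        (∑ n ∈ Finset.Icc 1 ⌊x⌋₊,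
          if Nat.gcd n (radical q) = 1 then Real.log n ^ k / (n : ℝ) else 0) -
          (∏ p ∈ q.primeFactors, (1 - 1 / (p : ℝ))) * Real.log x ^ (k + 1) / (k + 1))
      atTop
      (nhds (∑ r ∈ (Finset.Icc 1 q).filter (fun r => Nat.gcd r q = 1), G r)) := by
  set S := (Finset.Icc 1 q).filter (fun r => Nat.gcd r q = 1) with hS
  have hcard : (S.card : ℝ) = q.totient := by exact_mod_cast card_filter_coprime q hq
  have hprod : (∏ p ∈ q.primeFactors, (1 - 1 / (p : ℝ))) = (q.totient : ℝ) / q := by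
    have := Nat.totient_eq_mul_prod_factors q
    have h2 : ((q.totient : ℚ) : ℝ) = ((q : ℚ) * ∏ p ∈ q.primeFactors, (1 - (p : ℚ)⁻¹) : ℚ) := by
      exact_mod_cast congrArg (fun x : ℚ => (x : ℝ)) this
    push_cast at h2
    rw [eq_div_iff (by exact_mod_cast hq.ne' : (q : ℝ) ≠ 0)]
    simp only [one_div]
    linarith [h2]
  have hfun : ∀ x : ℝ,
      (∑ n ∈ Finset.Icc 1 ⌊x⌋₊,
          if Nat.gcd n (radical q) = 1 then Real.log n ^ k / (n : ℝ) else 0) -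
        (∏ p ∈ q.primeFactors, (1 - 1 / (p : ℝ))) * Real.log x ^ (k + 1) / (k + 1)
      = ∑ r ∈ S,
        ((∑ n ∈ Finset.Icc 1 ⌊x⌋₊, if n % q = r % q then Real.log n ^ k / (n : ℝ) else 0) -
          Real.log x ^ (k + 1) / (q * (k + 1))) := by
    intro x
    rw [Finset.sum_sub_distrib, Finset.sum_const, Finset.sum_comm]
    congr 1
    · apply Finset.sum_congr rfl
      intro n hn
      rw [Finset.mem_Icc] at hn
      exact (sum_residue_split q hq n hn.1 _).symm
    · rw [nsmul_eq_mul, hcard, hprod]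
      have hq0 : (q : ℝ) ≠ 0 := by exact_mod_cast hq.ne'
      have hk0 : (k : ℝ) + 1 ≠ 0 := by positivity
      field_simp
  simp only [hfun]
  exact tendsto_finset_sum S (fun r hr => by
    rw [hS, Finset.mem_filter] at hr
    exact hG r hr.1 hr.2)
end

section
/- Let P_r be the product of the first r primes. Then γ_0(𝒫_r) := lim_{x→∞} ( ∑_{n ≤ x, gcd(n,P_r)=1} 1/n − δ_r log x ) with δ_r = ∏_{i=1}^{r} (1 − 1/p_i) exists, and γ_0(𝒫_r) = lim_{s→1⁺} ( ζ(s) ∏_{i=1}^{r} (1 − p_i^{−s}) − δ_r/(s−1) ). -/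
open Filter Real Finset Topology

/-- The `i`-th prime (0-indexed). -/
noncomputable def nthPrime (i : ℕ) : ℕ := Nat.nth Nat.Prime i


lemma np_prime (i : ℕ) : (nthPrime i).Prime := Nat.prime_nth_prime i
lemma np_inj : Function.Injective nthPrime := Nat.nth_injective Nat.infinite_setOf_prime
lemma np_pos (i : ℕ) : 0 < nthPrime i := (np_prime i).pos

lemma harm_tendsto : Tendsto (fun n : ℕ => (harmonic n : ℝ) - Real.log n) atTop
    (𝓝 Real.eulerMascheroniConstant) := by
  apply Real.tendsto_eulerMascheroniSeq'.congr'
  filter_upwards [eventually_ne_atTop 0] with n hn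
  simp [Real.eulerMascheroniSeq', hn]

lemma log_floor_tendsto : Tendsto (fun y : ℝ => Real.log ⌊y⌋₊ - Real.log y) atTop (𝓝 0) := by
  have h1 : Tendsto (fun y : ℝ => Real.log (1 - 1/y)) atTop (𝓝 0) := by
    have h2 : Tendsto (fun y : ℝ => 1 - 1/y) atTop (𝓝 1) := by
      simpa using (tendsto_const_nhds (X := ℝ) (x := (1:ℝ))).sub tendsto_inv_atTop_zero
    have := (Real.continuousAt_log one_ne_zero).tendsto.comp h2
    simpa [Function.comp_def] using this
  apply tendsto_of_tendsto_of_tendsto_of_le_of_le' h1 tendsto_const_nhds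
  · filter_upwards [eventually_ge_atTop (2:ℝ)] with y hy
    have hy1 : (1:ℝ) ≤ y := by linarith
    have h0 : 0 < y - 1 := by linarith
    have : Real.log (1 - 1/y) = Real.log (y-1) - Real.log y := by
      rw [show (1 - 1/y) = (y-1)/y by field_simp, Real.log_div h0.ne' (by linarith)]
    rw [this]
    have : y - 1 ≤ (⌊y⌋₊ : ℝ) := by
      have := Nat.sub_one_lt_floor y
      linarith
    have hfl : Real.log (y-1) ≤ Real.log ⌊y⌋₊ := Real.log_le_log h0 this
    linarith
  · filter_upwards [eventually_ge_atTop (1:ℝ)] with y hy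
    have : (⌊y⌋₊ : ℝ) ≤ y := Nat.floor_le (by linarith)
    have := Real.log_le_log (by exact_mod_cast Nat.floor_pos.mpr hy) this
    linarith

-- per-divisor elementary limit
lemma termB {d : ℕ} (hd : 0 < d) :
    Tendsto (fun x : ℝ => (harmonic (⌊x⌋₊ / d) : ℝ) - Real.log x) atTop
      (𝓝 (Real.eulerMascheroniConstant - Real.log d)) := by
  have hdr : (0:ℝ) < d := Nat.cast_pos.mpr hd
  have hdiv : Tendsto (fun x : ℝ => x / d) atTop atTop :=
    tendsto_id.atTop_div_const hdr
  have h1 : Tendsto (fun x : ℝ => (harmonic ⌊x/d⌋₊ : ℝ) - Real.log ⌊x/d⌋₊) atTop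
      (𝓝 Real.eulerMascheroniConstant) :=
    harm_tendsto.comp (tendsto_nat_floor_atTop.comp hdiv)
  have h2 : Tendsto (fun x : ℝ => Real.log ⌊x/d⌋₊ - Real.log (x/d)) atTop (𝓝 0) :=
    log_floor_tendsto.comp hdiv
  have h3 := h1.add h2
  rw [add_zero] at h3
  have h4 : Tendsto (fun x : ℝ => (harmonic ⌊x/d⌋₊ : ℝ) - Real.log (x/d)) atTop
      (𝓝 Real.eulerMascheroniConstant) := by
    apply h3.congr; intro x; ring
  have h5 := h4.sub (tendsto_const_nhds (x := Real.log d))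
  apply h5.congr'
  filter_upwards [eventually_gt_atTop (0:ℝ)] with x hx
  rw [Real.log_div hx.ne' hdr.ne', Nat.floor_div_natCast]
  ring

-- sum over multiples
lemma termD (d : ℕ) (hd : 0 < d) (N : ℕ) :
    ∑ n ∈ (Finset.Icc 1 N).filter (fun n => d ∣ n), (1 / (n:ℝ)) =
      (1/(d:ℝ)) * (harmonic (N / d) : ℝ) := by
  have hH : ∀ m : ℕ, (harmonic m : ℝ) = ∑ k ∈ Finset.Icc 1 m, (1/(k:ℝ)) := by
    intro m
    induction m with
    | zero => simp
    | succ n ih =>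
      rw [harmonic_succ, Finset.sum_Icc_succ_top (Nat.one_le_iff_ne_zero.mpr n.succ_ne_zero), ← ih]
      push_cast
      ring
  rw [hH (N/d)]
  rw [Finset.mul_sum]
  rw [Finset.sum_nbij' (i := fun n => n / d) (j := fun k => d * k)]
  · intro n hn
    simp only [Finset.mem_filter, Finset.mem_Icc] at hn
    obtain ⟨⟨h1, h2⟩, c, rfl⟩ := hn
    simp only [Finset.mem_Icc]
    constructor
    · rw [Nat.mul_div_cancel_left _ hd]
      exact Nat.one_le_iff_ne_zero.mpr (by rintro rfl; simp at h1)
    · rw [Nat.mul_div_cancel_left _ hd]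
      exact Nat.le_div_iff_mul_le hd |>.mpr (by linarith [h2])
  · intro k hk
    simp only [Finset.mem_Icc] at hk
    simp only [Finset.mem_filter, Finset.mem_Icc]
    have hk1 : 1 ≤ k := hk.1
    refine ⟨⟨Nat.one_le_iff_ne_zero.mpr ?_, ?_⟩, Dvd.intro _ rfl⟩
    · exact Nat.mul_ne_zero hd.ne' (by omega)
    · calc d * k = k * d := mul_comm _ _
        _ ≤ N := (Nat.le_div_iff_mul_le hd).mp hk.2
  · intro n hn
    simp only [Finset.mem_filter] at hn
    exact Nat.mul_div_cancel' hn.2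
  · intro k hk
    exact Nat.mul_div_cancel_left _ hd
  · intro n hn
    simp only [Finset.mem_filter] at hn
    obtain ⟨_, c, rfl⟩ := hn
    rw [Nat.mul_div_cancel_left _ hd]
    push_cast [Nat.cast_pos.mpr hd]
    field_simp

-- E1 : product of distinct primes divides iff each divides
lemma prod_np_dvd_iff (T : Finset ℕ) (n : ℕ) :
    (∏ i ∈ T, nthPrime i) ∣ n ↔ ∀ i ∈ T, nthPrime i ∣ n := by
  induction T using Finset.cons_induction with
  | empty => simp
  | cons a T ha ih =>
    rw [Finset.prod_cons]
    constructor
    · intro h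
      intro i hi
      rcases Finset.mem_cons.mp hi with rfl | hi
      · exact (dvd_mul_right _ _).trans h
      · exact ih.mp ((dvd_mul_left _ _).trans h) i hi
    · intro h
      have hcop : Nat.Coprime (nthPrime a) (∏ i ∈ T, nthPrime i) := by
        apply Nat.Coprime.prod_right
        intro i hi
        exact (Nat.coprime_primes (np_prime a) (np_prime i)).mpr
          (fun he => ha (np_inj he ▸ hi))
      exact hcop.mul_dvd_of_dvd_of_dvd (h a (Finset.mem_cons_self a T))
        (ih.mpr (fun i hi => h i (Finset.mem_cons.mpr (Or.inr hi))))

-- E : indicator identity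
lemma indicator_eq (r : ℕ) (n : ℕ) :
    (if Nat.gcd n (∏ i ∈ Finset.range r, nthPrime i) = 1 then (1:ℝ) else 0) =
      ∑ T ∈ (Finset.range r).powerset,
        (-1:ℝ)^(T.card) * (if (∏ i ∈ T, nthPrime i) ∣ n then 1 else 0) := by
  classical
  set A : Finset ℕ := (Finset.range r).filter (fun i => nthPrime i ∣ n) with hA
  have step1 : ∀ T ∈ (Finset.range r).powerset,
      (-1:ℝ)^(T.card) * (if (∏ i ∈ T, nthPrime i) ∣ n then 1 else 0) =
      (if T ⊆ A then (-1:ℝ)^(T.card) else 0) := by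
    intro T hT
    rw [Finset.mem_powerset] at hT
    by_cases h : (∏ i ∈ T, nthPrime i) ∣ n
    · rw [if_pos h, if_pos, mul_one]
      intro i hi
      exact Finset.mem_filter.mpr ⟨hT hi, (prod_np_dvd_iff T n).mp h i hi⟩
    · rw [if_neg h, if_neg, mul_zero]
      intro hsub
      exact h ((prod_np_dvd_iff T n).mpr (fun i hi => (Finset.mem_filter.mp (hsub hi)).2))
  rw [Finset.sum_congr rfl step1]
  have hAsub : A.powerset ⊆ (Finset.range r).powerset :=
    Finset.powerset_mono.mpr (Finset.filter_subset _ _)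
  rw [← Finset.sum_subset hAsub (by
    intro T hT hTA
    rw [Finset.mem_powerset] at hTA
    exact if_neg hTA)]
  have : ∑ T ∈ A.powerset, (if T ⊆ A then (-1:ℝ)^(T.card) else 0) =
      ∑ T ∈ A.powerset, (-1:ℝ)^(T.card) := by
    apply Finset.sum_congr rfl
    intro T hT
    exact if_pos (Finset.mem_powerset.mp hT)
  rw [this]
  have key : ∑ T ∈ A.powerset, (-1:ℝ)^(T.card) = if A = ∅ then 1 else 0 := by
    have := Finset.sum_powerset_neg_one_pow_card (x := A)
    have h2 : ((∑ m ∈ A.powerset, (-1 : ℤ) ^ m.card : ℤ) : ℝ) = ∑ T ∈ A.powerset, (-1:ℝ)^(T.card) := by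
      push_cast; rfl
    rw [← h2, this]
    split <;> simp
  rw [key]
  congr 1
  rw [eq_iff_iff]
  constructor
  · intro hg
    rw [Finset.eq_empty_iff_forall_notMem]
    intro i hi
    rw [hA, Finset.mem_filter] at hi
    have hcop : Nat.Coprime n (nthPrime i) :=
      Nat.Coprime.coprime_dvd_right (Finset.dvd_prod_of_mem _ hi.1) hg
    exact ((np_prime i).coprime_iff_not_dvd.mp hcop.symm) hi.2
  · intro hA0
    apply Nat.Coprime.prod_right
    intro i hi
    have : i ∉ A := hA0 ▸ Finset.notMem_empty i
    rw [hA, Finset.mem_filter] at this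
    push_neg at this
    exact (Nat.coprime_comm.mp ((np_prime i).coprime_iff_not_dvd.mpr (this hi)))

-- F : real delta expansion
lemma delta_expand (r : ℕ) :
    (∏ i ∈ Finset.range r, (1 - 1 / (nthPrime i : ℝ))) =
      ∑ T ∈ (Finset.range r).powerset, (-1:ℝ)^(T.card) / (∏ i ∈ T, nthPrime i : ℕ) := by
  have := Finset.prod_add (fun i => -(1 / (nthPrime i : ℝ))) (fun _ => (1:ℝ)) (Finset.range r)
  rw [show (∏ i ∈ Finset.range r, (1 - 1 / (nthPrime i : ℝ))) =
    ∏ i ∈ Finset.range r, (-(1 / (nthPrime i : ℝ)) + 1) from by congr 1; ext i; ring, this]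
  apply Finset.sum_congr rfl
  intro T hT
  rw [Finset.prod_const_one, mul_one]
  rw [show (fun i => -(1/(nthPrime i:ℝ))) = fun i => (-1) * (1/(nthPrime i:ℝ)) from by ext i; ring]
  rw [Finset.prod_mul_distrib, Finset.prod_const]
  rw [div_eq_mul_inv]
  congr 1
  push_cast
  rw [← Finset.prod_inv_distrib]
  apply Finset.prod_congr rfl
  intro i _
  rw [one_div]

-- G : complex product expansion, for any s
lemma prod_cpow (T : Finset ℕ) (s : ℂ) :
    ∏ i ∈ T, ((nthPrime i : ℂ)) ^ (-s) = ((∏ i ∈ T, nthPrime i : ℕ) : ℂ) ^ (-s) := by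
  induction T using Finset.cons_induction with
  | empty => simp
  | cons a T ha ih =>
    rw [Finset.prod_cons, Finset.prod_cons, ih]
    have h := Complex.mul_cpow_ofReal_nonneg (a := (nthPrime a : ℝ))
      (b := ((∏ i ∈ T, nthPrime i : ℕ) : ℝ)) (Nat.cast_nonneg _) (Nat.cast_nonneg _) (-s)
    push_cast at h ⊢
    rw [h]

lemma zeta_expand (r : ℕ) (s : ℂ) :
    ∏ i ∈ Finset.range r, (1 - (nthPrime i : ℂ) ^ (-s)) =
      ∑ T ∈ (Finset.range r).powerset, (-1:ℂ)^(T.card) * ((∏ i ∈ T, nthPrime i : ℕ) : ℂ) ^ (-s) := by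
  have := Finset.prod_add (fun i => -((nthPrime i : ℂ) ^ (-s))) (fun _ => (1:ℂ)) (Finset.range r)
  rw [show (∏ i ∈ Finset.range r, (1 - (nthPrime i : ℂ) ^ (-s))) =
    ∏ i ∈ Finset.range r, (-((nthPrime i : ℂ) ^ (-s)) + 1) from by congr 1; ext i; ring, this]
  apply Finset.sum_congr rfl
  intro T hT
  rw [Finset.prod_const_one, mul_one]
  rw [show (fun i => -((nthPrime i:ℂ)^(-s))) = fun i => (-1) * ((nthPrime i:ℂ)^(-s)) from by ext i; ring]
  rw [Finset.prod_mul_distrib, Finset.prod_const, prod_cpow]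

lemma zeta_term_tendsto {d : ℕ} (hd : 0 < d) :
    Tendsto (fun s : ℂ => riemannZeta s * (d:ℂ)^(-s) - ((1:ℂ)/d)/(s-1)) (𝓝[≠] (1:ℂ))
      (𝓝 (((Real.eulerMascheroniConstant - Real.log d)/d : ℝ) : ℂ)) := by
  have hd0 : (d:ℂ) ≠ 0 := Nat.cast_ne_zero.mpr hd.ne'
  have hdR : (0:ℝ) < d := Nat.cast_pos.mpr hd
  -- first piece : d^{-s} (ζ s - 1/(s-1)) → d⁻¹ γ
  have hcont : Tendsto (fun s : ℂ => (d:ℂ)^(-s)) (𝓝[≠] (1:ℂ)) (𝓝 ((d:ℂ)^(-1:ℂ))) := by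
    have : ContinuousAt (fun s : ℂ => (d:ℂ)^(-s)) 1 :=
      (continuousAt_const_cpow hd0).comp (continuousAt_neg (x := (1:ℂ)))
    exact (this.tendsto.comp (by exact tendsto_id)).mono_left nhdsWithin_le_nhds
  have h1 : Tendsto (fun s : ℂ => (d:ℂ)^(-s) * (riemannZeta s - 1/(s-1))) (𝓝[≠] (1:ℂ))
      (𝓝 ((d:ℂ)^(-1:ℂ) * Real.eulerMascheroniConstant)) :=
    hcont.mul tendsto_riemannZeta_sub_one_div
  -- second piece : (d^{-s} - d^{-1})/(s-1) → -log d * d⁻¹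
  have hderiv : HasDerivAt (fun s : ℂ => (d:ℂ)^(-s)) ((d:ℂ)^(-1:ℂ) * Complex.log d * (-1)) 1 := by
    have h := (Complex.hasStrictDerivAt_const_cpow (x := (d:ℂ)) (y := (-1:ℂ)) (Or.inl hd0)).hasDerivAt
    have hn : HasDerivAt (fun s : ℂ => -s) (-1 : ℂ) 1 := (hasDerivAt_id (1:ℂ)).neg
    simpa [Function.comp_def] using h.comp 1 hn
  have h2 : Tendsto (fun s : ℂ => ((d:ℂ)^(-s) - (d:ℂ)^(-1:ℂ))/(s-1)) (𝓝[≠] (1:ℂ))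
      (𝓝 ((d:ℂ)^(-1:ℂ) * Complex.log d * (-1))) := by
    have := hasDerivAt_iff_tendsto_slope.mp hderiv
    apply this.congr
    intro s
    rw [slope_def_field]
  have h3 := h1.add h2
  have hval : (d:ℂ)^(-1:ℂ) * Real.eulerMascheroniConstant + (d:ℂ)^(-1:ℂ) * Complex.log d * (-1)
      = (((Real.eulerMascheroniConstant - Real.log d)/d : ℝ) : ℂ) := by
    rw [show ((-1:ℂ)) = ((-1:ℤ):ℂ) by norm_num, Complex.cpow_intCast, ← Complex.natCast_log]
    push_cast
    field_simp
    ring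
  rw [hval] at h3
  apply h3.congr'
  filter_upwards [self_mem_nhdsWithin] with s hs
  have hs1 : s - 1 ≠ 0 := sub_ne_zero.mpr hs
  rw [show ((-1:ℂ)) = ((-1:ℤ):ℂ) by norm_num, Complex.cpow_intCast]
  field_simp
  ring

lemma dT_pos (T : Finset ℕ) : 0 < ∏ i ∈ T, nthPrime i :=
  Finset.prod_pos (fun i _ => np_pos i)


/-- `γ_0(𝒫_r)` exists as a limit and equals
`lim_{s→1⁺} ( ζ(s) ∏_{i=1}^{r} (1 − p_i^{-s}) − δ_r/(s−1) )`. -/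
theorem stmt14 (r : ℕ) :
    ∃ L : ℝ,
      Tendsto (fun x : ℝ =>
          (∑ n ∈ Finset.Icc 1 ⌊x⌋₊,
            if Nat.gcd n (∏ i ∈ Finset.range r, nthPrime i) = 1 then 1 / (n : ℝ) else 0) -
            (∏ i ∈ Finset.range r, (1 - 1 / (nthPrime i : ℝ))) * Real.log x)
        atTop (nhds L) ∧
      Tendsto (fun s : ℝ =>
          riemannZeta s * ∏ i ∈ Finset.range r, (1 - (nthPrime i : ℂ) ^ (-(s : ℂ))) -
            ((∏ i ∈ Finset.range r, (1 - 1 / (nthPrime i : ℝ))) : ℝ) / ((s : ℂ) - 1))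
        (nhdsWithin 1 (Set.Ioi 1)) (nhds (L : ℂ)) := by
  classical
  set P := (Finset.range r).powerset with hP
  set γ := Real.eulerMascheroniConstant with hγ
  set dd : Finset ℕ → ℕ := fun T => ∏ i ∈ T, nthPrime i with hdd
  refine ⟨∑ T ∈ P, (-1:ℝ)^(T.card) * ((γ - Real.log (dd T)) / (dd T)), ?_, ?_⟩
  · -- elementary side
    have key : ∀ x : ℝ,
        (∑ n ∈ Finset.Icc 1 ⌊x⌋₊,
            if Nat.gcd n (∏ i ∈ Finset.range r, nthPrime i) = 1 then 1 / (n : ℝ) else 0) -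
          (∏ i ∈ Finset.range r, (1 - 1 / (nthPrime i : ℝ))) * Real.log x =
        ∑ T ∈ P, (-1:ℝ)^(T.card) * (1/(dd T : ℝ)) *
          ((harmonic (⌊x⌋₊ / dd T) : ℝ) - Real.log x) := by
      intro x
      have hS : (∑ n ∈ Finset.Icc 1 ⌊x⌋₊,
          if Nat.gcd n (∏ i ∈ Finset.range r, nthPrime i) = 1 then 1 / (n : ℝ) else 0) =
          ∑ T ∈ P, (-1:ℝ)^(T.card) * (1/(dd T : ℝ)) * (harmonic (⌊x⌋₊ / dd T) : ℝ) := by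
        have step : ∀ n, (if Nat.gcd n (∏ i ∈ Finset.range r, nthPrime i) = 1
              then 1 / (n : ℝ) else 0) =
            ∑ T ∈ P, (-1:ℝ)^(T.card) * (if dd T ∣ n then 1/(n:ℝ) else 0) := by
          intro n
          have h0 : (if Nat.gcd n (∏ i ∈ Finset.range r, nthPrime i) = 1
              then 1 / (n : ℝ) else 0) =
              (if Nat.gcd n (∏ i ∈ Finset.range r, nthPrime i) = 1 then (1:ℝ) else 0) * (1/(n:ℝ)) := by
            split <;> simp
          rw [h0, indicator_eq r n, Finset.sum_mul]
          apply Finset.sum_congr rfl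
          intro T _
          rw [mul_assoc]
          congr 1
          split <;> simp
        rw [Finset.sum_congr rfl (fun n _ => step n), Finset.sum_comm]
        apply Finset.sum_congr rfl
        intro T _
        rw [← Finset.mul_sum, ← Finset.sum_filter, termD (dd T) (dT_pos T), mul_assoc]
      rw [hS, delta_expand, Finset.sum_mul, ← Finset.sum_sub_distrib]
      apply Finset.sum_congr rfl
      intro T _
      ring
    simp only [key]
    have lim : Tendsto (fun x : ℝ => ∑ T ∈ P, (-1:ℝ)^(T.card) * (1/(dd T : ℝ)) *
        ((harmonic (⌊x⌋₊ / dd T) : ℝ) - Real.log x)) atTop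
        (𝓝 (∑ T ∈ P, (-1:ℝ)^(T.card) * (1/(dd T : ℝ)) * (γ - Real.log (dd T)))) := by
      apply tendsto_finset_sum
      intro T _
      exact (termB (dT_pos T)).const_mul _
    convert lim using 2
    apply Finset.sum_congr rfl
    intro T _
    ring
  · -- zeta side
    have hmap : Tendsto (fun s : ℝ => (s:ℂ)) (𝓝[Set.Ioi 1] (1:ℝ)) (𝓝[≠] (1:ℂ)) := by
      rw [tendsto_nhdsWithin_iff]
      constructor
      · exact (Complex.continuous_ofReal.tendsto 1).mono_left nhdsWithin_le_nhds
      · filter_upwards [self_mem_nhdsWithin] with s hs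
        simp only [Set.mem_compl_iff, Set.mem_singleton_iff]
        intro h
        have h1 : s = 1 := by exact_mod_cast h
        subst h1
        exact lt_irrefl 1 (Set.mem_Ioi.mp hs)
    have hG : Tendsto (fun z : ℂ => ∑ T ∈ P, (-1:ℂ)^(T.card) *
        (riemannZeta z * ((dd T : ℕ):ℂ)^(-z) - ((1:ℂ)/(dd T))/(z-1))) (𝓝[≠] (1:ℂ))
        (𝓝 (∑ T ∈ P, (-1:ℂ)^(T.card) * (((γ - Real.log (dd T))/(dd T) : ℝ) : ℂ))) := by
      apply tendsto_finset_sum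
      intro T _
      exact (zeta_term_tendsto (dT_pos T)).const_mul _
    have hval : (∑ T ∈ P, (-1:ℂ)^(T.card) * (((γ - Real.log (dd T))/(dd T) : ℝ) : ℂ)) =
        ((∑ T ∈ P, (-1:ℝ)^(T.card) * ((γ - Real.log (dd T)) / (dd T)) : ℝ) : ℂ) := by
      push_cast
      rfl
    rw [hval] at hG
    apply (hG.comp hmap).congr'
    filter_upwards [self_mem_nhdsWithin] with s hs
    have hs1 : (s:ℂ) ≠ 1 := by
      intro h
      have h1 : s = 1 := by exact_mod_cast h
      subst h1
      exact lt_irrefl 1 (Set.mem_Ioi.mp hs)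
    have hsub : (s:ℂ) - 1 ≠ 0 := sub_ne_zero.mpr hs1
    simp only [Function.comp_apply]
    rw [zeta_expand, Finset.mul_sum]
    have hδ : (((∏ i ∈ Finset.range r, (1 - 1 / (nthPrime i : ℝ))) : ℝ) : ℂ) =
        ∑ T ∈ P, (-1:ℂ)^(T.card) * ((1:ℂ)/(dd T)) := by
      rw [delta_expand]
      simp only [hdd]
      push_cast
      apply Finset.sum_congr rfl
      intro T _
      ring
    rw [hδ, Finset.sum_div, ← Finset.sum_sub_distrib]
    apply Finset.sum_congr rfl
    intro T _
    ring
end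

section
/- For any squarefree positive integer n = P_r (a product of distinct primes p_1 < ⋯ < p_r) and k ∈ ℕ: ∑_{d | P_r} μ(d)(log d)^k / d = ∏_{i=1}^{r}(1 − 1/p_i) · ∑_{S ⊆ {p_1,…,p_r}} L_k(P_S)/∏_{p ∈ S}(p−1), where L_k(n) = ∑_{d | n} μ(d)(log d)^k and P_S = ∏_{p ∈ S} p. -/
open Real Finset ArithmeticFunction

/-- `L_k(n) = ∑_{d | n} μ(d) (log d)^k`. -/
noncomputable def Lk (k n : ℕ) : ℝ :=
  ∑ d ∈ n.divisors, (ArithmeticFunction.moebius d : ℝ) * Real.log d ^ k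

lemma aux_squarefree_prod (P : Finset ℕ) (hP : ∀ p ∈ P, p.Prime) :
    Squarefree (∏ p ∈ P, p) := by
  classical
  induction P using Finset.induction_on with
  | empty => simpa using squarefree_one
  | insert a s hx ih =>
    rw [Finset.prod_insert hx]
    have ha : a.Prime := hP a (Finset.mem_insert_self a s)
    have hs : ∀ p ∈ s, p.Prime := fun p hp => hP p (Finset.mem_insert_of_mem hp)
    have hcop : Nat.Coprime a (∏ p ∈ s, p) := by
      rw [Nat.Prime.coprime_iff_not_dvd ha]
      intro hdvd
      obtain ⟨q, hq, hdq⟩ := (Nat.Prime.prime ha).dvd_finset_prod_iff _ |>.mp hdvd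
      exact hx (((hs q hq).dvd_iff_eq ha.ne_one).1 hdq ▸ hq)
    exact (Nat.squarefree_mul hcop).2 ⟨ha.squarefree, ih hs⟩

lemma aux_sum_divisors_prod (P : Finset ℕ) (hP : ∀ p ∈ P, p.Prime) (F : ℕ → ℝ) :
    ∑ d ∈ (∏ p ∈ P, p).divisors, F d = ∑ T ∈ P.powerset, F (∏ p ∈ T, p) := by
  classical
  have hne : (∏ p ∈ P, p) ≠ 0 :=
    Finset.prod_ne_zero_iff.2 fun p hp => (hP p hp).ne_zero
  have hsq := aux_squarefree_prod P hP
  refine (Finset.sum_nbij' (fun T => ∏ p ∈ T, p) (fun d => d.primeFactors) ?_ ?_ ?_ ?_ ?_).symm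
  · intro T hT
    rw [Finset.mem_powerset] at hT
    exact Nat.mem_divisors.2 ⟨Finset.prod_dvd_prod_of_subset _ _ _ hT, hne⟩
  · intro d hd
    rw [Finset.mem_powerset]
    have hdvd := Nat.dvd_of_mem_divisors hd
    have := Nat.primeFactors_mono hdvd hne
    rwa [Nat.primeFactors_prod hP] at this
  · intro T hT
    rw [Finset.mem_powerset] at hT
    exact Nat.primeFactors_prod fun p hp => hP p (hT hp)
  · intro d hd
    exact Nat.prod_primeFactors_of_squarefree
      (hsq.squarefree_of_dvd (Nat.dvd_of_mem_divisors hd))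
  · intro T hT
    rfl

/-- For a squarefree `P_r = ∏_{p ∈ P} p` (product of distinct primes):
`∑_{d | P_r} μ(d)(log d)^k / d = ∏_{p}(1 − 1/p) · ∑_{S ⊆ P} L_k(P_S)/∏_{p ∈ S}(p−1)`. -/
theorem stmt16 (P : Finset ℕ) (hP : ∀ p ∈ P, p.Prime) (k : ℕ) :
    ∑ d ∈ (∏ p ∈ P, p).divisors,
        (ArithmeticFunction.moebius d : ℝ) * Real.log d ^ k / d =
      (∏ p ∈ P, (1 - 1 / (p : ℝ))) *
        ∑ S ∈ P.powerset, Lk k (∏ p ∈ S, p) / ∏ p ∈ S, ((p : ℝ) - 1) := by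
  classical
  -- rewrite LHS
  rw [aux_sum_divisors_prod P hP]
  -- rewrite Lk
  have hLk : ∀ S ∈ P.powerset, Lk k (∏ p ∈ S, p) / ∏ p ∈ S, ((p : ℝ) - 1)
      = ∑ T ∈ S.powerset,
          (ArithmeticFunction.moebius (∏ p ∈ T, p) : ℝ) * Real.log (∏ p ∈ T, p) ^ k *
            (∏ p ∈ S, ((p : ℝ) - 1))⁻¹ := by
    intro S hS
    rw [Finset.mem_powerset] at hS
    rw [Lk, aux_sum_divisors_prod S (fun p hp => hP p (hS hp)), div_eq_mul_inv,
      Finset.sum_mul]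
    exact Finset.sum_congr rfl fun T _ => by rw [Nat.cast_prod]
  rw [Finset.sum_congr rfl hLk]
  -- swap sums
  rw [Finset.sum_comm' (s' := fun T => P.powerset.filter (fun S => T ⊆ S))
    (t' := P.powerset) (by
      intro S T
      simp only [Finset.mem_powerset, Finset.mem_filter]
      constructor
      · rintro ⟨h1, h2⟩; exact ⟨⟨h1, h2⟩, h2.trans h1⟩
      · rintro ⟨⟨h1, h2⟩, _⟩; exact ⟨h1, h2⟩)]
  rw [Finset.mul_sum]
  refine Finset.sum_congr rfl fun T hT => ?_
  rw [Finset.mem_powerset] at hT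
  -- inner sum over S ⊇ T
  have hinner : ∑ S ∈ P.powerset.filter (fun S => T ⊆ S),
        (ArithmeticFunction.moebius (∏ p ∈ T, p) : ℝ) * Real.log (∏ p ∈ T, p) ^ k *
          (∏ p ∈ S, ((p : ℝ) - 1))⁻¹
      = (ArithmeticFunction.moebius (∏ p ∈ T, p) : ℝ) * Real.log (∏ p ∈ T, p) ^ k *
          ((∏ p ∈ T, ((p : ℝ) - 1))⁻¹ * ∏ p ∈ P \ T, (((p : ℝ) - 1)⁻¹ + 1)) := by
    rw [← Finset.mul_sum]
    congr 1
    have hre : ∑ S ∈ P.powerset.filter (fun S => T ⊆ S), (∏ p ∈ S, ((p : ℝ) - 1))⁻¹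
        = ∑ U ∈ (P \ T).powerset, (∏ p ∈ T ∪ U, ((p : ℝ) - 1))⁻¹ := by
      refine (Finset.sum_nbij' (fun U => T ∪ U) (fun S => S \ T) ?_ ?_ ?_ ?_ ?_).symm
      · intro U hU
        rw [Finset.mem_powerset] at hU
        rw [Finset.mem_filter, Finset.mem_powerset]
        exact ⟨Finset.union_subset hT (hU.trans (Finset.sdiff_subset)),
          Finset.subset_union_left⟩
      · intro S hS
        rw [Finset.mem_filter, Finset.mem_powerset] at hS
        rw [Finset.mem_powerset]
        exact Finset.sdiff_subset_sdiff hS.1 (Finset.Subset.refl T)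
      · intro U hU
        rw [Finset.mem_powerset] at hU
        show (T ∪ U) \ T = U
        rw [Finset.union_sdiff_cancel_left
          (Finset.disjoint_right.mpr fun a haU => (Finset.mem_sdiff.mp (hU haU)).2)]
      · intro S hS
        rw [Finset.mem_filter] at hS
        show T ∪ (S \ T) = S
        exact Finset.union_sdiff_of_subset hS.2
      · intro U hU; rfl
    rw [hre]
    have hsum : ∀ U ∈ (P \ T).powerset, (∏ p ∈ T ∪ U, ((p : ℝ) - 1))⁻¹
        = (∏ p ∈ T, ((p : ℝ) - 1))⁻¹ * ∏ p ∈ U, ((p : ℝ) - 1)⁻¹ := by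
      intro U hU
      rw [Finset.mem_powerset] at hU
      have hdisj : Disjoint T U :=
        Finset.disjoint_right.mpr fun a haU => (Finset.mem_sdiff.mp (hU haU)).2
      rw [Finset.prod_union hdisj, mul_inv]
      congr 1
      rw [Finset.prod_inv_distrib]
    rw [Finset.sum_congr rfl hsum, ← Finset.mul_sum]
    congr 1
    rw [Finset.prod_add]
    refine Finset.sum_congr rfl fun U hU => ?_
    simp
  rw [hinner]
  -- per-prime identities
  have hfacts : ∀ p ∈ P, (p : ℝ) ≠ 0 ∧ (p : ℝ) - 1 ≠ 0 := by
    intro p hp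
    have h2 : 2 ≤ p := (hP p hp).two_le
    have h2' : (2 : ℝ) ≤ (p : ℝ) := by exact_mod_cast h2
    constructor <;> intro h <;> nlinarith
  have hsplit : (∏ p ∈ P, (1 - 1 / (p : ℝ))) =
      (∏ p ∈ P \ T, (1 - 1 / (p : ℝ))) * ∏ p ∈ T, (1 - 1 / (p : ℝ)) :=
    (Finset.prod_sdiff hT).symm
  have hcast : ((∏ p ∈ T, p : ℕ) : ℝ) = ∏ p ∈ T, (p : ℝ) := by push_cast; rfl
  rw [hcast, hsplit, div_eq_mul_inv]
  have hT1 : (∏ p ∈ T, (1 - 1 / (p : ℝ))) * (∏ p ∈ T, ((p : ℝ) - 1))⁻¹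
      = (∏ p ∈ T, (p : ℝ))⁻¹ := by
    rw [← Finset.prod_inv_distrib, ← Finset.prod_inv_distrib, ← Finset.prod_mul_distrib]
    refine Finset.prod_congr rfl fun p hp => ?_
    obtain ⟨h0, h1⟩ := hfacts p (hT hp)
    field_simp
  have hT2 : (∏ p ∈ P \ T, (1 - 1 / (p : ℝ))) * (∏ p ∈ P \ T, (((p : ℝ) - 1)⁻¹ + 1)) = 1 := by
    rw [← Finset.prod_mul_distrib]
    rw [Finset.prod_eq_one]
    intro p hp
    obtain ⟨h0, h1⟩ := hfacts p (Finset.mem_sdiff.mp hp).1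
    field_simp
    ring
  linear_combination
    (-(((ArithmeticFunction.moebius (∏ p ∈ T, p) : ℝ) * Real.log (∏ p ∈ T, p) ^ k))) * hT1 -
    ((ArithmeticFunction.moebius (∏ p ∈ T, p) : ℝ) * Real.log (∏ p ∈ T, p) ^ k *
      (∏ p ∈ T, (1 - 1 / (p : ℝ))) * (∏ p ∈ T, ((p : ℝ) - 1))⁻¹) * hT2
end

section
/- For k ∈ ℕ and positive integers r ≤ q, the generalized Euler–Lehmer constant satisfies γ_k(r,q) = (1/q) ∑_{j=0}^{k} C(k,j) (log q)^{k−j} γ_j(r/q) − (log q)^{k+1}/(q(k+1)), where γ_j(a) is the j-th generalized Stieltjes constant, γ_j(a) = lim_{N→∞} ( ∑_{m=0}^{N} (log(m+a))^j/(m+a) − (log(N+a))^{j+1}/(j+1) ). -/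
open Filter Real Finset

/-- `γ_k(r,q) = (1/q) ∑_{j=0}^{k} C(k,j) (log q)^{k-j} γ_j(r/q) − (log q)^{k+1}/(q(k+1))`,
relating generalized Euler–Lehmer constants to generalized Stieltjes constants. -/
theorem stmt19 (k : ℕ) (r q : ℕ) (hr : 0 < r) (hrq : r ≤ q)
    (G : ℝ) (γ : ℕ → ℝ)
    (hG : Tendsto (fun x : ℝ =>
        (∑ n ∈ Finset.Icc 1 ⌊x⌋₊, if n % q = r % q then Real.log n ^ k / (n : ℝ) else 0) -
          Real.log x ^ (k + 1) / (q * (k + 1)))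
      atTop (nhds G))
    (hγ : ∀ j ∈ Finset.range (k + 1),
      Tendsto (fun N : ℕ =>
          (∑ m ∈ Finset.range (N + 1),
            Real.log ((m : ℝ) + (r : ℝ) / q) ^ j / ((m : ℝ) + (r : ℝ) / q)) -
            Real.log ((N : ℝ) + (r : ℝ) / q) ^ (j + 1) / (j + 1))
        atTop (nhds (γ j))) :
    G = (1 / (q : ℝ)) * (∑ j ∈ Finset.range (k + 1),
          (Nat.choose k j : ℝ) * Real.log q ^ (k - j) * γ j) -
        Real.log q ^ (k + 1) / (q * (k + 1)) := by
  have hq : 0 < q := lt_of_lt_of_le hr hrq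
  have hqR : (0:ℝ) < q := by exact_mod_cast hq
  have hq0 : (q:ℝ) ≠ 0 := hqR.ne'
  set a : ℝ := (r:ℝ)/q with ha
  have ha0 : 0 < a := div_pos (by exact_mod_cast hr) hqR
  have hma : ∀ m : ℕ, (0:ℝ) < (m:ℝ) + a := fun m => by positivity
  set Lq := Real.log q with hLq
  -- the sequence x_N = N*q + r tends to infinity
  have hx : Tendsto (fun N : ℕ => ((N*q + r : ℕ) : ℝ)) atTop atTop := by
    apply tendsto_natCast_atTop_atTop.comp
    apply tendsto_atTop_mono (fun N => ?_) tendsto_id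
    calc (id N : ℕ) = N * 1 := (mul_one N).symm
      _ ≤ N * q + r := le_trans (Nat.mul_le_mul_left N hq) (Nat.le_add_right _ _)
  have hcast : ∀ m : ℕ, ((m*q + r : ℕ):ℝ) = q * ((m:ℝ) + a) := by
    intro m
    push_cast
    rw [ha, mul_add, mul_div_cancel₀ _ hq0]
    ring
  have hlog : ∀ m : ℕ, Real.log ((m*q+r : ℕ):ℝ) = Lq + Real.log ((m:ℝ)+a) := by
    intro m
    rw [hcast m, Real.log_mul hq0 (hma m).ne']
  -- identity (i): the filtered sum equals the binomial combination
  have h1 : ∀ N : ℕ,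
      (∑ n ∈ Finset.Icc 1 (N*q+r), if n % q = r % q then Real.log n ^ k / (n : ℝ) else 0)
      = ∑ j ∈ Finset.range (k+1), ((Nat.choose k j : ℝ) * Lq^(k-j) / q) *
          ∑ m ∈ Finset.range (N+1), Real.log ((m:ℝ)+a)^j / ((m:ℝ)+a) := by
    intro N
    rw [← Finset.sum_filter]
    have himg : (Finset.Icc 1 (N*q+r)).filter (fun n => n % q = r % q)
        = (Finset.range (N+1)).image (fun m => m*q+r) := by
      ext n
      simp only [Finset.mem_filter, Finset.mem_Icc, Finset.mem_image, Finset.mem_range,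
        Nat.lt_succ_iff]
      constructor
      · rintro ⟨⟨h1', h2'⟩, h3'⟩
        have hnr : r ≤ n := by
          rcases eq_or_lt_of_le hrq with hEq | hLt
          · have h0 : n % q = 0 := by rw [h3', hEq, Nat.mod_self]
            rw [hEq]
            exact Nat.le_of_dvd h1' (Nat.dvd_of_mod_eq_zero h0)
          · have : n % q = r := by rwa [Nat.mod_eq_of_lt hLt] at h3'
            calc r = n % q := this.symm
              _ ≤ n := Nat.mod_le n q
        have hdvd : q ∣ n - r := Nat.dvd_of_mod_eq_zero (Nat.sub_mod_eq_zero_of_mod_eq h3')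
        obtain ⟨m, hm⟩ := hdvd
        have hmn : n = q * m + r := by omega
        refine ⟨m, ?_, by rw [mul_comm]; omega⟩
        have hle : q * m ≤ q * N := by rw [mul_comm q N]; omega
        exact Nat.le_of_mul_le_mul_left hle hq
      · rintro ⟨m, hm, rfl⟩
        refine ⟨⟨by omega, Nat.add_le_add_right (Nat.mul_le_mul_right q hm) r⟩, ?_⟩
        simp [Nat.add_mod, Nat.mul_mod_left]
    rw [himg, Finset.sum_image (fun m₁ _ m₂ _ h => Nat.eq_of_mul_eq_mul_right hq (by omega))]
    calc ∑ m ∈ Finset.range (N+1), Real.log ((m*q+r : ℕ):ℝ)^k / ((m*q+r : ℕ):ℝ)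
        = ∑ m ∈ Finset.range (N+1), ∑ j ∈ Finset.range (k+1),
            ((Nat.choose k j : ℝ) * Lq^(k-j) / q) * (Real.log ((m:ℝ)+a)^j / ((m:ℝ)+a)) := by
          refine Finset.sum_congr rfl fun m _ => ?_
          rw [hlog m, hcast m, add_comm Lq, add_pow, Finset.sum_div]
          refine Finset.sum_congr rfl fun j hj => ?_
          have h := (hma m).ne'
          field_simp
      _ = _ := by
          rw [Finset.sum_comm]
          exact Finset.sum_congr rfl fun j _ => (Finset.mul_sum _ _ _).symm
  -- identity (ii): the divergent term expansion
  have h2 : ∀ N : ℕ,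
      Real.log ((N*q+r : ℕ):ℝ) ^ (k+1) / (q*(k+1))
      = (∑ j ∈ Finset.range (k+1), ((Nat.choose k j : ℝ) * Lq^(k-j) / q) *
          (Real.log ((N:ℝ)+a)^(j+1) / (j+1))) + Lq^(k+1) / (q*(k+1)) := by
    intro N
    rw [hlog N]
    set L := Real.log ((N:ℝ)+a) with hL
    have hbin : (Lq + L)^(k+1)
        = (∑ j ∈ Finset.range (k+1), L^(j+1) * Lq^(k-j) * (Nat.choose (k+1) (j+1) : ℝ))
          + Lq^(k+1) := by
      rw [add_comm Lq, add_pow, Finset.sum_range_succ']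
      simp [Nat.succ_sub_succ]
    rw [hbin, add_div, Finset.sum_div]
    congr 1
    refine Finset.sum_congr rfl fun j hj => ?_
    have hj' : j < k + 1 := Finset.mem_range.mp hj
    have hchoose : ((k+1 : ℕ) : ℝ) * (Nat.choose k j : ℝ)
        = (Nat.choose (k+1) (j+1) : ℝ) * ((j+1 : ℕ) : ℝ) := by
      exact_mod_cast congrArg (Nat.cast : ℕ → ℝ) (Nat.add_one_mul_choose_eq k j)
    have hk1 : ((k:ℝ)+1) ≠ 0 := by positivity
    have hj1 : ((j:ℝ)+1) ≠ 0 := by positivity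
    push_cast at hchoose
    field_simp
    linear_combination (-(L^(j+1) * Lq^(k-j))) * hchoose
  -- the composed limit
  have hG2 : Tendsto (fun N : ℕ =>
      (∑ n ∈ Finset.Icc 1 (N*q+r), if n % q = r % q then Real.log n ^ k / (n : ℝ) else 0) -
        Real.log ((N*q+r : ℕ):ℝ) ^ (k+1) / (q*(k+1))) atTop (nhds G) := by
    have := hG.comp hx
    simpa only [Function.comp_def, Nat.floor_natCast] using this
  -- rewrite the composed sequence
  have hFN : ∀ N : ℕ,
      (∑ n ∈ Finset.Icc 1 (N*q+r), if n % q = r % q then Real.log n ^ k / (n : ℝ) else 0) -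
        Real.log ((N*q+r : ℕ):ℝ) ^ (k+1) / (q*(k+1))
      = (∑ j ∈ Finset.range (k+1), ((Nat.choose k j : ℝ) * Lq^(k-j) / q) *
          ((∑ m ∈ Finset.range (N+1), Real.log ((m:ℝ)+a)^j / ((m:ℝ)+a))
            - Real.log ((N:ℝ)+a)^(j+1) / (j+1)))
        - Lq^(k+1) / (q*(k+1)) := by
    intro N
    rw [h1 N, h2 N]
    rw [Finset.sum_congr rfl (fun j _ => mul_sub (((Nat.choose k j : ℝ) * Lq^(k-j) / q)) _ _),
      Finset.sum_sub_distrib]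
    ring
  have hG3 : Tendsto (fun N : ℕ =>
      (∑ j ∈ Finset.range (k+1), ((Nat.choose k j : ℝ) * Lq^(k-j) / q) *
          ((∑ m ∈ Finset.range (N+1), Real.log ((m:ℝ)+a)^j / ((m:ℝ)+a))
            - Real.log ((N:ℝ)+a)^(j+1) / (j+1)))
        - Lq^(k+1) / (q*(k+1))) atTop (nhds G) := by
    refine hG2.congr fun N => hFN N
  have hlim : Tendsto (fun N : ℕ =>
      (∑ j ∈ Finset.range (k+1), ((Nat.choose k j : ℝ) * Lq^(k-j) / q) *
          ((∑ m ∈ Finset.range (N+1), Real.log ((m:ℝ)+a)^j / ((m:ℝ)+a))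
            - Real.log ((N:ℝ)+a)^(j+1) / (j+1)))
        - Lq^(k+1) / (q*(k+1))) atTop
      (nhds ((∑ j ∈ Finset.range (k+1), ((Nat.choose k j : ℝ) * Lq^(k-j) / q) * γ j)
        - Lq^(k+1) / (q*(k+1)))) := by
    refine Tendsto.sub ?_ tendsto_const_nhds
    exact tendsto_finset_sum _ fun j hj => ((hγ j hj).const_mul _)
  have hGE := tendsto_nhds_unique hG3 hlim
  rw [hGE, Finset.mul_sum]
  congr 1
  exact Finset.sum_congr rfl fun j _ => by ring
end
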